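/- arXiv:1705.09793 — 6 statements merged into one kernel-verified Lean document; each statement's English description precedes it below -/
import Mathlib

section
/- Let C be an n×n symmetric real matrix such that C − m(C)·J_n is positive semidefinite, where m(C) is the mean of the entries of C. If C is positive definite and βᵀ(C − m(C)·J_n)β = 0 for some vector β ∈ ℝⁿ, then β is proportional to the all-ones vector 1_n. -/
open Matrix in
/-- If `C` is symmetric with `C - m(C)·J ⪰ 0`, `C` is positive definite and
`βᵀ (C - m(C)·J) β = 0`, then `β` is proportional to the all-ones vector. -/
theorem null_vector_constant (n : ℕ) (hn : 1 ≤ n)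
    (C : Matrix (Fin n) (Fin n) ℝ) (hCsymm : C.IsSymm)
    (m : ℝ) (hm : m = (∑ i, ∑ j, C i j) / ((n : ℝ) ^ 2))
    (hpsd : (C - m • Matrix.of (fun _ _ => (1 : ℝ))).PosSemidef)
    (hpd : C.PosDef) (β : Fin n → ℝ)
    (hβ : β ⬝ᵥ ((C - m • Matrix.of (fun _ _ => (1 : ℝ))) *ᵥ β) = 0) :
    ∃ t : ℝ, β = fun _ => t := by
  set J : Matrix (Fin n) (Fin n) ℝ := Matrix.of (fun _ _ => (1 : ℝ)) with hJ
  set A : Matrix (Fin n) (Fin n) ℝ := C - m • J with hA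
  have hn0 : (n : ℝ) ≠ 0 := by positivity
  -- A β = 0
  have hAβ : A *ᵥ β = 0 := (hpsd.dotProduct_mulVec_zero_iff β).mp hβ
  -- 1ᵀ A 1 = 0
  have hone : (fun _ => (1:ℝ)) ⬝ᵥ (A *ᵥ (fun _ => (1:ℝ))) = 0 := by
    have hJ1 : (fun _ => (1:ℝ)) ⬝ᵥ (J *ᵥ (fun _ => (1:ℝ))) = (n : ℝ)^2 := by
      simp [Matrix.mulVec, dotProduct, hJ, sq]
    have hC1 : (fun _ => (1:ℝ)) ⬝ᵥ (C *ᵥ (fun _ => (1:ℝ))) = ∑ i, ∑ j, C i j := by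
      simp [Matrix.mulVec, dotProduct]
    simp only [hA, Matrix.sub_mulVec, Matrix.smul_mulVec,
      dotProduct_sub, dotProduct_smul, smul_eq_mul, hC1, hJ1, hm]
    field_simp
    ring
  have hA1 : A *ᵥ (fun _ => (1:ℝ)) = 0 :=
    (hpsd.dotProduct_mulVec_zero_iff _).mp hone
  set s : ℝ := ∑ i, β i with hs
  set v : Fin n → ℝ := β - (s / n) • (fun _ => (1:ℝ)) with hv
  -- A v = 0
  have hAv : A *ᵥ v = 0 := by
    rw [hv, Matrix.mulVec_sub, Matrix.mulVec_smul, hAβ, hA1, smul_zero, sub_zero]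
  -- J v = 0
  have hJv : J *ᵥ v = 0 := by
    funext i
    simp only [hv, Matrix.mulVec, dotProduct, hJ, Matrix.of_apply, one_mul,
      Pi.sub_apply, Pi.smul_apply, smul_eq_mul, mul_one, Pi.zero_apply]
    rw [Finset.sum_sub_distrib]
    simp [← hs, Finset.sum_const, Finset.card_univ]
    field_simp
    ring
  -- C v = 0
  have hCv : C *ᵥ v = 0 := by
    have : C *ᵥ v = A *ᵥ v + m • (J *ᵥ v) := by
      rw [hA, Matrix.sub_mulVec, Matrix.smul_mulVec, sub_add_cancel]
    rw [this, hAv, hJv, smul_zero, add_zero]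
  -- v = 0 by PosDef
  have hv0 : v = 0 := by
    by_contra h
    have := hpd.dotProduct_mulVec_pos h
    rw [hCv] at this
    simp at this
  refine ⟨s / n, ?_⟩
  funext i
  have := congrFun hv0 i
  simp only [hv, Pi.sub_apply, Pi.smul_apply, smul_eq_mul, mul_one, Pi.zero_apply] at this
  linarith
end

section
/- Let A be an n×n symmetric matrix partitioned into p×p blocks according to a partition of {1,…,n} into groups of sizes n_1,…,n_p, such that all off-diagonal blocks A_{k,ℓ} (k≠ℓ) are constant matrices, and each diagonal block A_{k,k} satisfies A_{k,k} − m(A_{k,k})·J_{n_k} is positive semidefinite. Then A is positive semidefinite if and only if the p×p block average matrix φ(A) is positive semidefinite and every diagonal block A_{k,k} is positive semidefinite. -/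
open Matrix in
private lemma quad_fin' {ι : Type*} [Fintype ι] (M : Matrix ι ι ℝ) (v : ι → ℝ) :
    star v ⬝ᵥ M *ᵥ v = ∑ i, ∑ j, v i * M i j * v j := by
  simp [dotProduct, mulVec, Finset.mul_sum, mul_assoc]

open Matrix in
private lemma quad_sigma' {p : ℕ} {n : Fin p → ℕ}
    (B : Matrix ((k : Fin p) × Fin (n k)) ((k : Fin p) × Fin (n k)) ℝ)
    (x : ((k : Fin p) × Fin (n k)) → ℝ) :
    star x ⬝ᵥ B *ᵥ x
      = ∑ k : Fin p, ∑ l : Fin p, ∑ i : Fin (n k), ∑ j : Fin (n l),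
          x ⟨k, i⟩ * B ⟨k, i⟩ ⟨l, j⟩ * x ⟨l, j⟩ := by
  simp only [dotProduct, mulVec, star_trivial, ← Finset.univ_sigma_univ, Finset.sum_sigma,
    Finset.mul_sum, mul_assoc]
  refine Finset.sum_congr rfl fun k _ => ?_
  rw [Finset.sum_comm]

private lemma sum_sum_mul_const' {α β : Type*} [Fintype α] [Fintype β]
    (c : ℝ) (f : α → ℝ) (g : β → ℝ) :
    ∑ i, ∑ j, f i * c * g j = c * ((∑ i, f i) * (∑ j, g j)) := by
  rw [Finset.sum_mul_sum]
  simp only [Finset.mul_sum]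
  exact Finset.sum_congr rfl fun i _ => Finset.sum_congr rfl fun j _ => by ring


private lemma sum_sum_const_mul' {α β : Type*} [Fintype α] [Fintype β]
    (c d : ℝ) (h : α → β → ℝ) :
    ∑ i, ∑ j, c * h i j * d = c * d * ∑ i, ∑ j, h i j := by
  simp only [Finset.mul_sum]
  exact Finset.sum_congr rfl fun i _ => Finset.sum_congr rfl fun j _ => by ring

open Matrix in
/-- Theorem 1, statement 1: for a symmetric block matrix `A` with constant
off-diagonal blocks and diagonal blocks `A_{k,k}` satisfying
`A_{k,k} - m(A_{k,k})·J ⪰ 0`, `A` is positive semidefinite iff the block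
average matrix `φ(A)` is positive semidefinite and every diagonal block is
positive semidefinite. -/
theorem blockClassG_posSemidef_iff (p : ℕ) (n : Fin p → ℕ) (hn : ∀ k, 0 < n k)
    (A : Matrix ((k : Fin p) × Fin (n k)) ((k : Fin p) × Fin (n k)) ℝ)
    (hsymm : A.IsSymm)
    (hoff : ∀ k l : Fin p, k ≠ l → ∀ (i i' : Fin (n k)) (j j' : Fin (n l)),
      A ⟨k, i⟩ ⟨l, j⟩ = A ⟨k, i'⟩ ⟨l, j'⟩)
    (hdiag : ∀ k : Fin p,
      (Matrix.of (fun i j : Fin (n k) => A ⟨k, i⟩ ⟨k, j⟩) -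
        ((∑ i : Fin (n k), ∑ j : Fin (n k), A ⟨k, i⟩ ⟨k, j⟩) / ((n k : ℝ) ^ 2)) •
          Matrix.of (fun _ _ => (1 : ℝ))).PosSemidef) :
    A.PosSemidef ↔
      ((Matrix.of (fun k l : Fin p => (1 / ((n k : ℝ) * (n l : ℝ))) *
          ∑ i : Fin (n k), ∑ j : Fin (n l), A ⟨k, i⟩ ⟨l, j⟩)).PosSemidef ∧
        ∀ k : Fin p,
          (Matrix.of (fun i j : Fin (n k) => A ⟨k, i⟩ ⟨k, j⟩)).PosSemidef) := by
  have hsym' : ∀ a b, A b a = A a b := fun a b => congrFun (congrFun hsymm a) b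
  have hnz : ∀ k, (n k : ℝ) ≠ 0 := fun k => Nat.cast_ne_zero.mpr (hn k).ne'
  set φ : Matrix (Fin p) (Fin p) ℝ :=
    Matrix.of (fun k l : Fin p => (1 / ((n k : ℝ) * (n l : ℝ))) *
      ∑ i : Fin (n k), ∑ j : Fin (n l), A ⟨k, i⟩ ⟨l, j⟩) with hφdef
  -- off-diagonal entries equal the block mean
  have hconst : ∀ k l : Fin p, k ≠ l → ∀ (i : Fin (n k)) (j : Fin (n l)),
      A ⟨k, i⟩ ⟨l, j⟩ = φ k l := by
    intro k l hkl i j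
    have hsum : (∑ i' : Fin (n k), ∑ j' : Fin (n l), A ⟨k, i'⟩ ⟨l, j'⟩)
        = (n k : ℝ) * (n l : ℝ) * A ⟨k, i⟩ ⟨l, j⟩ := by
      rw [Finset.sum_congr rfl fun i' _ =>
        Finset.sum_congr rfl fun j' _ => (hoff k l hkl i' i j' j : _)]
      simp [Finset.sum_const, mul_assoc]
    have h1 := hnz k; have h2 := hnz l
    simp only [hφdef, Matrix.of_apply, hsum]
    field_simp
  constructor
  · intro hA
    constructor
    · -- φ is PSD
      refine Matrix.PosSemidef.of_dotProduct_mulVec_nonneg ?_ ?_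
      · ext k l
        simp only [conjTranspose_apply, star_trivial, hφdef, Matrix.of_apply]
        rw [mul_comm (n l : ℝ) (n k : ℝ), Finset.sum_comm]
        congr 1
        exact Finset.sum_congr rfl fun i _ => Finset.sum_congr rfl fun j _ => hsym' _ _
      · intro y
        have h0 := hA.dotProduct_mulVec_nonneg (fun q : (k : Fin p) × Fin (n k) => y q.1 / (n q.1 : ℝ))
        rw [quad_sigma'] at h0
        rw [quad_fin']
        refine le_of_le_of_eq h0 (Finset.sum_congr rfl fun k _ =>
          Finset.sum_congr rfl fun l _ => ?_)
        show (∑ i : Fin (n k), ∑ j : Fin (n l),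
            y k / (n k : ℝ) * A ⟨k, i⟩ ⟨l, j⟩ * (y l / (n l : ℝ))) = y k * φ k l * y l
        rw [sum_sum_const_mul']
        have h1 := hnz k; have h2 := hnz l
        simp only [hφdef, Matrix.of_apply]
        field_simp
    · -- diagonal blocks are PSD
      intro k
      refine Matrix.PosSemidef.of_dotProduct_mulVec_nonneg ?_ ?_
      · ext i j
        simp only [conjTranspose_apply, star_trivial, Matrix.of_apply]
        exact hsym' _ _
      · intro v
        set x : ((k : Fin p) × Fin (n k)) → ℝ := fun q =>
          if h : q.1 = k then v (Fin.cast (congrArg n h) q.2) else 0 with hxdef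
        have h0 := hA.dotProduct_mulVec_nonneg x
        rw [quad_sigma'] at h0
        rw [Finset.sum_eq_single k (fun b _ hb => by simp [hxdef, hb])
          (by simp)] at h0
        rw [Finset.sum_eq_single k (fun b _ hb => by simp [hxdef, hb])
          (by simp)] at h0
        rw [quad_fin']
        refine le_of_le_of_eq h0 (Finset.sum_congr rfl fun i _ =>
          Finset.sum_congr rfl fun j _ => ?_)
        simp [hxdef]
  · rintro ⟨hφps, hD⟩
    refine Matrix.PosSemidef.of_dotProduct_mulVec_nonneg ?_ ?_
    · ext a b
      simp only [conjTranspose_apply, star_trivial]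
      exact hsym' _ _
    · intro x
      rw [quad_sigma']
      set S : Fin p → ℝ := fun k => ∑ i : Fin (n k), x ⟨k, i⟩ with hSdef
      set Q : Fin p → ℝ := fun k =>
        star (fun i : Fin (n k) => x ⟨k, i⟩) ⬝ᵥ
          ((Matrix.of (fun i j : Fin (n k) => A ⟨k, i⟩ ⟨k, j⟩) -
            ((∑ i : Fin (n k), ∑ j : Fin (n k), A ⟨k, i⟩ ⟨k, j⟩) / ((n k : ℝ) ^ 2)) •
              Matrix.of (fun _ _ => (1 : ℝ))) *ᵥ (fun i => x ⟨k, i⟩)) with hQdef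
      have key : ∀ k l : Fin p,
          (∑ i : Fin (n k), ∑ j : Fin (n l), x ⟨k, i⟩ * A ⟨k, i⟩ ⟨l, j⟩ * x ⟨l, j⟩)
            = S k * φ k l * S l + (if k = l then Q k else 0) := by
        intro k l
        by_cases hkl : k = l
        · subst hkl
          rw [if_pos rfl]
          have hQ : Q k = (∑ i : Fin (n k), ∑ j : Fin (n k),
              x ⟨k, i⟩ * A ⟨k, i⟩ ⟨k, j⟩ * x ⟨k, j⟩)
              - ((∑ i : Fin (n k), ∑ j : Fin (n k), A ⟨k, i⟩ ⟨k, j⟩) / ((n k : ℝ) ^ 2))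
                * (S k * S k) := by
            simp only [hQdef]
            rw [quad_fin']
            simp only [Matrix.sub_apply, Matrix.smul_apply, Matrix.of_apply, smul_eq_mul,
              mul_one, mul_sub, sub_mul, Finset.sum_sub_distrib]
            rw [sum_sum_mul_const' (f := fun i : Fin (n k) => x ⟨k, i⟩)
              (g := fun j : Fin (n k) => x ⟨k, j⟩)]
          rw [hQ]
          have : S k * φ k k * S k
              = ((∑ i : Fin (n k), ∑ j : Fin (n k), A ⟨k, i⟩ ⟨k, j⟩) / ((n k : ℝ) ^ 2))
                * (S k * S k) := by
            simp only [hφdef, Matrix.of_apply]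
            ring
          rw [this]; ring
        · simp only [if_neg hkl, add_zero]
          rw [Finset.sum_congr rfl fun i _ => Finset.sum_congr rfl fun j _ => by
            rw [hconst k l hkl i j]]
          rw [sum_sum_mul_const' (f := fun i : Fin (n k) => x ⟨k, i⟩)
            (g := fun j : Fin (n l) => x ⟨l, j⟩)]
          ring
      rw [Finset.sum_congr rfl fun k _ => Finset.sum_congr rfl fun l _ => key k l]
      simp only [Finset.sum_add_distrib, Finset.sum_ite_eq, Finset.mem_univ, if_pos]
      have h1 : 0 ≤ ∑ k : Fin p, ∑ l : Fin p, S k * φ k l * S l := by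
        have := hφps.dotProduct_mulVec_nonneg S
        rwa [quad_fin'] at this
      have h2 : 0 ≤ ∑ k : Fin p, Q k :=
        Finset.sum_nonneg fun k _ => (hdiag k).dotProduct_mulVec_nonneg _
      exact add_nonneg h1 h2
end

section
/- Let A be an n×n symmetric matrix with constant off-diagonal blocks and diagonal blocks A_{k,k} satisfying A_{k,k} − m(A_{k,k})·J_{n_k} ⪰ 0 (as in the class B̃_p). Then A is positive definite if and only if the block average matrix φ(A) is positive definite and every diagonal block A_{k,k} is positive definite. -/
open Matrix in
private lemma dot_mulVec_expand {ι : Type*} [Fintype ι] (M : Matrix ι ι ℝ) (y : ι → ℝ) :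
    y ⬝ᵥ M *ᵥ y = ∑ i, ∑ j, y i * M i j * y j := by
  simp [dotProduct, mulVec, Finset.mul_sum, mul_assoc]

open Matrix in
/-- Theorem 1, statement 2: for a symmetric block matrix `A` with constant
off-diagonal blocks and diagonal blocks `A_{k,k}` satisfying
`A_{k,k} - m(A_{k,k})·J ⪰ 0` (positive semidefinite), `A` is positive definite iff the block
average matrix `φ(A)` is positive definite and every diagonal block is
positive definite. -/
theorem blockClassG_posDef_iff (p : ℕ) (n : Fin p → ℕ) (hn : ∀ k, 0 < n k)
    (A : Matrix ((k : Fin p) × Fin (n k)) ((k : Fin p) × Fin (n k)) ℝ)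
    (hsymm : A.IsSymm)
    (hoff : ∀ k l : Fin p, k ≠ l → ∀ (i i' : Fin (n k)) (j j' : Fin (n l)),
      A ⟨k, i⟩ ⟨l, j⟩ = A ⟨k, i'⟩ ⟨l, j'⟩)
    (hdiag : ∀ k : Fin p,
      (Matrix.of (fun i j : Fin (n k) => A ⟨k, i⟩ ⟨k, j⟩) -
        ((∑ i : Fin (n k), ∑ j : Fin (n k), A ⟨k, i⟩ ⟨k, j⟩) / ((n k : ℝ) ^ 2)) •
          Matrix.of (fun _ _ => (1 : ℝ))).PosSemidef) :
    A.PosDef ↔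
      ((Matrix.of (fun k l : Fin p => (1 / ((n k : ℝ) * (n l : ℝ))) *
          ∑ i : Fin (n k), ∑ j : Fin (n l), A ⟨k, i⟩ ⟨l, j⟩)).PosDef ∧
        ∀ k : Fin p,
          (Matrix.of (fun i j : Fin (n k) => A ⟨k, i⟩ ⟨k, j⟩)).PosDef) := by
  classical
  have hnR : ∀ k, (n k : ℝ) ≠ 0 := fun k => Nat.cast_ne_zero.2 (hn k).ne'
  have hsym' : ∀ q r, A r q = A q r := fun q r => hsymm.apply q r
  have hherm : A.IsHermitian := by
    rw [Matrix.IsHermitian, Matrix.conjTranspose_eq_transpose_of_trivial]; exact hsymm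
  -- expansion of the quadratic form of A into blocks
  have hexpand : ∀ x : ((k : Fin p) × Fin (n k)) → ℝ,
      x ⬝ᵥ A *ᵥ x = ∑ k : Fin p, ∑ l : Fin p, ∑ i : Fin (n k), ∑ j : Fin (n l),
        x ⟨k, i⟩ * A ⟨k, i⟩ ⟨l, j⟩ * x ⟨l, j⟩ := by
    intro x
    rw [dot_mulVec_expand, ← Finset.univ_sigma_univ, Finset.sum_sigma]
    refine Finset.sum_congr rfl fun k _ => ?_
    have h : ∀ i : Fin (n k), (∑ r : (l : Fin p) × Fin (n l), x ⟨k,i⟩ * A ⟨k,i⟩ r * x r)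
        = ∑ l : Fin p, ∑ j : Fin (n l), x ⟨k,i⟩ * A ⟨k,i⟩ ⟨l,j⟩ * x ⟨l,j⟩ := fun i => by
      rw [← Finset.univ_sigma_univ, Finset.sum_sigma]
    exact (Finset.sum_congr rfl fun i _ => h i).trans Finset.sum_comm
  -- off-diagonal pairs
  have hpair : ∀ (x : ((k : Fin p) × Fin (n k)) → ℝ) (k l : Fin p), k ≠ l →
      (∑ i : Fin (n k), ∑ j : Fin (n l), x ⟨k, i⟩ * A ⟨k, i⟩ ⟨l, j⟩ * x ⟨l, j⟩) =
      ((1 / ((n k : ℝ) * (n l : ℝ))) * ∑ i : Fin (n k), ∑ j : Fin (n l), A ⟨k, i⟩ ⟨l, j⟩) *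
        ((∑ i : Fin (n k), x ⟨k, i⟩) * (∑ j : Fin (n l), x ⟨l, j⟩)) := by
    intro x k l hkl
    have hval : ∀ i j, A ⟨k, i⟩ ⟨l, j⟩ = A ⟨k, ⟨0, hn k⟩⟩ ⟨l, ⟨0, hn l⟩⟩ :=
      fun i j => hoff k l hkl i ⟨0, hn k⟩ j ⟨0, hn l⟩
    set c := A ⟨k, ⟨0, hn k⟩⟩ ⟨l, ⟨0, hn l⟩⟩ with hc
    have hsum : (∑ i : Fin (n k), ∑ j : Fin (n l), A ⟨k, i⟩ ⟨l, j⟩)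
        = (n k : ℝ) * ((n l : ℝ) * c) := by
      simp [hval, Finset.sum_const, mul_assoc]
    calc (∑ i : Fin (n k), ∑ j : Fin (n l), x ⟨k, i⟩ * A ⟨k, i⟩ ⟨l, j⟩ * x ⟨l, j⟩)
        = ∑ i : Fin (n k), ∑ j : Fin (n l), (x ⟨k, i⟩ * x ⟨l, j⟩) * c := by
          refine Finset.sum_congr rfl fun i _ => Finset.sum_congr rfl fun j _ => ?_
          rw [hval i j]; ring
      _ = (∑ i : Fin (n k), ∑ j : Fin (n l), x ⟨k, i⟩ * x ⟨l, j⟩) * c := by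
          simp only [← Finset.sum_mul]
      _ = ((∑ i : Fin (n k), x ⟨k, i⟩) * (∑ j : Fin (n l), x ⟨l, j⟩)) * c := by
          rw [Finset.sum_mul_sum]
      _ = _ := by
          rw [hsum]
          have h2 : 1 / ((n k : ℝ) * (n l : ℝ)) * ((n k : ℝ) * ((n l : ℝ) * c)) = c := by
            field_simp
            rw [div_eq_iff (mul_ne_zero (hnR k) (hnR l))]
            ring
          rw [h2]; ring
  -- quadratic form of the centered diagonal block
  have hBform : ∀ (k : Fin p) (y : Fin (n k) → ℝ),
      y ⬝ᵥ ((Matrix.of (fun i j : Fin (n k) => A ⟨k, i⟩ ⟨k, j⟩) -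
        ((∑ i : Fin (n k), ∑ j : Fin (n k), A ⟨k, i⟩ ⟨k, j⟩) / ((n k : ℝ) ^ 2)) •
          Matrix.of (fun _ _ => (1 : ℝ))) *ᵥ y)
      = (∑ i : Fin (n k), ∑ j : Fin (n k), y i * A ⟨k, i⟩ ⟨k, j⟩ * y j)
        - ((∑ i : Fin (n k), ∑ j : Fin (n k), A ⟨k, i⟩ ⟨k, j⟩) / ((n k : ℝ) ^ 2)) *
          ((∑ i, y i) * (∑ i, y i)) := by
    intro k y
    rw [dot_mulVec_expand, Finset.sum_mul_sum]
    simp only [Finset.mul_sum]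
    rw [← Finset.sum_sub_distrib]
    refine Finset.sum_congr rfl fun i _ => ?_
    rw [← Finset.sum_sub_distrib]
    refine Finset.sum_congr rfl fun j _ => ?_
    simp only [Matrix.sub_apply, Matrix.smul_apply, Matrix.of_apply, smul_eq_mul, mul_one]
    ring
  -- the key decomposition of the quadratic form
  have hkey : ∀ x : ((k : Fin p) × Fin (n k)) → ℝ,
      x ⬝ᵥ A *ᵥ x =
        (fun k => ∑ i : Fin (n k), x ⟨k, i⟩) ⬝ᵥ
          ((Matrix.of (fun k l : Fin p => (1 / ((n k : ℝ) * (n l : ℝ))) *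
            ∑ i : Fin (n k), ∑ j : Fin (n l), A ⟨k, i⟩ ⟨l, j⟩)) *ᵥ
            (fun k => ∑ i : Fin (n k), x ⟨k, i⟩)) +
        ∑ k : Fin p, ((fun i => x ⟨k, i⟩) ⬝ᵥ
          ((Matrix.of (fun i j : Fin (n k) => A ⟨k, i⟩ ⟨k, j⟩) -
            ((∑ i : Fin (n k), ∑ j : Fin (n k), A ⟨k, i⟩ ⟨k, j⟩) / ((n k : ℝ) ^ 2)) •
              Matrix.of (fun _ _ => (1 : ℝ))) *ᵥ (fun i => x ⟨k, i⟩))) := by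
    intro x
    rw [hexpand, dot_mulVec_expand]
    simp only [hBform, Matrix.of_apply]
    rw [← Finset.sum_add_distrib]
    refine Finset.sum_congr rfl fun k _ => ?_
    have hsingle : (∑ i : Fin (n k), ∑ j : Fin (n k), x ⟨k, i⟩ * A ⟨k, i⟩ ⟨k, j⟩ * x ⟨k, j⟩)
          - ((∑ i : Fin (n k), ∑ j : Fin (n k), A ⟨k, i⟩ ⟨k, j⟩) / ((n k : ℝ) ^ 2)) *
            ((∑ i : Fin (n k), x ⟨k, i⟩) * (∑ i : Fin (n k), x ⟨k, i⟩))
        = ∑ l : Fin p, (if l = k then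
            (∑ i : Fin (n k), ∑ j : Fin (n k), x ⟨k, i⟩ * A ⟨k, i⟩ ⟨k, j⟩ * x ⟨k, j⟩)
            - ((∑ i : Fin (n k), ∑ j : Fin (n k), A ⟨k, i⟩ ⟨k, j⟩) / ((n k : ℝ) ^ 2)) *
              ((∑ i : Fin (n k), x ⟨k, i⟩) * (∑ i : Fin (n k), x ⟨k, i⟩)) else 0) := by
      simp
    rw [hsingle, ← Finset.sum_add_distrib]
    refine Finset.sum_congr rfl fun l _ => ?_
    by_cases hlk : l = k
    · subst hlk
      rw [if_pos rfl]
      have hll : (1 / ((n l : ℝ) * (n l : ℝ))) *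
          (∑ i : Fin (n l), ∑ j : Fin (n l), A ⟨l, i⟩ ⟨l, j⟩)
          = (∑ i : Fin (n l), ∑ j : Fin (n l), A ⟨l, i⟩ ⟨l, j⟩) / ((n l : ℝ) ^ 2) := by
        rw [sq]; ring
      rw [hll]; ring
    · rw [if_neg hlk, add_zero, hpair x k l (fun h => hlk h.symm)]
      ring
  constructor
  · -- forward direction
    intro hA
    constructor
    · -- φ(A) is positive definite
      refine Matrix.posDef_iff_dotProduct_mulVec.2 ⟨?_, ?_⟩
      · rw [Matrix.IsHermitian, Matrix.conjTranspose_eq_transpose_of_trivial]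
        ext k l
        simp only [Matrix.transpose_apply, Matrix.of_apply]
        rw [Finset.sum_comm]
        have : ∀ j i, A ⟨l, j⟩ ⟨k, i⟩ = A ⟨k, i⟩ ⟨l, j⟩ := fun j i => hsym' _ _
        simp_rw [this]
        ring
      · intro t ht
        have hstar : star t = t := by ext q; simp
        rw [hstar]
        set x : ((k : Fin p) × Fin (n k)) → ℝ := fun q => t q.1 / (n q.1 : ℝ) with hxdef
        have hs : ∀ k, (∑ i : Fin (n k), x ⟨k, i⟩) = t k := by
          intro k
          simp only [hxdef, Finset.sum_const, Finset.card_univ, Fintype.card_fin,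
            nsmul_eq_mul]
          field_simp
          rw [mul_comm, mul_div_assoc, div_self (hnR k), mul_one]
        have hx0 : x ≠ 0 := by
          obtain ⟨k, hk⟩ := Function.ne_iff.1 ht
          intro h
          apply hk
          have := congrFun h ⟨k, ⟨0, hn k⟩⟩
          simp only [hxdef, Pi.zero_apply] at this
          have := (div_eq_zero_iff.1 this).resolve_right (hnR k)
          simpa using this
        have hq := (Matrix.posDef_iff_dotProduct_mulVec.1 hA).2 hx0
        have hstarx : star x = x := by ext q; simp
        rw [hstarx, hkey x] at hq
        have hBzero : ∀ k : Fin p, ((fun i => x ⟨k, i⟩) ⬝ᵥ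
            ((Matrix.of (fun i j : Fin (n k) => A ⟨k, i⟩ ⟨k, j⟩) -
              ((∑ i : Fin (n k), ∑ j : Fin (n k), A ⟨k, i⟩ ⟨k, j⟩) / ((n k : ℝ) ^ 2)) •
                Matrix.of (fun _ _ => (1 : ℝ))) *ᵥ (fun i => x ⟨k, i⟩))) = 0 := by
          intro k
          rw [hBform, hs k]
          have hxc : ∀ i : Fin (n k), x ⟨k, i⟩ = t k / (n k : ℝ) := fun i => rfl
          have h1 : (∑ i : Fin (n k), ∑ j : Fin (n k), x ⟨k, i⟩ * A ⟨k, i⟩ ⟨k, j⟩ * x ⟨k, j⟩)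
              = (t k / (n k : ℝ) * (t k / (n k : ℝ))) *
                (∑ i : Fin (n k), ∑ j : Fin (n k), A ⟨k, i⟩ ⟨k, j⟩) := by
            simp only [hxc]
            rw [Finset.mul_sum]
            refine Finset.sum_congr rfl fun i _ => ?_
            rw [Finset.mul_sum]
            refine Finset.sum_congr rfl fun j _ => ?_
            ring
          rw [h1, sub_eq_zero, sq]
          field_simp
        have hsve : (fun k => ∑ i : Fin (n k), x ⟨k, i⟩) = t := funext hs
        rw [hsve] at hq
        simp only [hBzero, Finset.sum_const_zero, add_zero] at hq
        exact hq
    · -- each diagonal block is positive definite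
      intro k
      refine Matrix.posDef_iff_dotProduct_mulVec.2 ⟨?_, ?_⟩
      · rw [Matrix.IsHermitian, Matrix.conjTranspose_eq_transpose_of_trivial]
        ext i j
        simp only [Matrix.transpose_apply, Matrix.of_apply]
        exact hsym' _ _
      · intro y hy
        have hstar : star y = y := by ext q; simp
        rw [hstar]
        set x : ((l : Fin p) × Fin (n l)) → ℝ :=
          fun q => if h : q.1 = k then y (Fin.cast (congrArg n h) q.2) else 0 with hxdef
        have hxk : ∀ i, x ⟨k, i⟩ = y i := by intro i; simp [hxdef]
        have hxl : ∀ l, l ≠ k → ∀ i : Fin (n l), x ⟨l, i⟩ = 0 := by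
          intro l hl i; simp [hxdef, hl]
        have hx0 : x ≠ 0 := by
          obtain ⟨i, hi⟩ := Function.ne_iff.1 hy
          intro h
          apply hi
          have := congrFun h ⟨k, i⟩
          rwa [hxk, Pi.zero_apply] at this
        have hq := (Matrix.posDef_iff_dotProduct_mulVec.1 hA).2 hx0
        have hstarx : star x = x := by ext q; simp
        rw [hstarx, hexpand x] at hq
        rw [Fintype.sum_eq_single k (fun l hl => by simp [hxl l hl])] at hq
        rw [Fintype.sum_eq_single k (fun l hl => by simp [hxl l hl])] at hq
        rw [dot_mulVec_expand]
        simp only [Matrix.of_apply]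
        simp only [hxk] at hq
        exact hq
  · -- backward direction
    rintro ⟨hphi, hD⟩
    refine Matrix.posDef_iff_dotProduct_mulVec.2 ⟨hherm, ?_⟩
    intro x hx
    have hstarx : star x = x := by ext q; simp
    rw [hstarx, hkey x]
    have hBnn : ∀ k : Fin p, 0 ≤ ((fun i => x ⟨k, i⟩) ⬝ᵥ
        ((Matrix.of (fun i j : Fin (n k) => A ⟨k, i⟩ ⟨k, j⟩) -
          ((∑ i : Fin (n k), ∑ j : Fin (n k), A ⟨k, i⟩ ⟨k, j⟩) / ((n k : ℝ) ^ 2)) •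
            Matrix.of (fun _ _ => (1 : ℝ))) *ᵥ (fun i => x ⟨k, i⟩))) := by
      intro k
      have := (Matrix.posSemidef_iff_dotProduct_mulVec.1 (hdiag k)).2 (fun i => x ⟨k, i⟩)
      have hst : star (fun i => x ⟨k, i⟩) = fun i => x ⟨k, i⟩ := by ext q; simp
      rwa [hst] at this
    by_cases hs : (fun k => ∑ i : Fin (n k), x ⟨k, i⟩) = 0
    · -- the block sums vanish
      have hterm : ∀ k : Fin p, ((fun i => x ⟨k, i⟩) ⬝ᵥ
          ((Matrix.of (fun i j : Fin (n k) => A ⟨k, i⟩ ⟨k, j⟩) -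
            ((∑ i : Fin (n k), ∑ j : Fin (n k), A ⟨k, i⟩ ⟨k, j⟩) / ((n k : ℝ) ^ 2)) •
              Matrix.of (fun _ _ => (1 : ℝ))) *ᵥ (fun i => x ⟨k, i⟩)))
          = (fun i => x ⟨k, i⟩) ⬝ᵥ
            ((Matrix.of (fun i j : Fin (n k) => A ⟨k, i⟩ ⟨k, j⟩)) *ᵥ (fun i => x ⟨k, i⟩)) := by
        intro k
        rw [hBform, dot_mulVec_expand]
        have h0 : (∑ i : Fin (n k), x ⟨k, i⟩) = 0 := congrFun hs k
        simp [h0, Matrix.of_apply]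
      rw [hs]
      simp only [hterm]
      obtain ⟨q, hq⟩ := Function.ne_iff.1 hx
      obtain ⟨k0, i0⟩ := q
      have hpos : 0 < ((fun i => x ⟨k0, i⟩) ⬝ᵥ
          ((Matrix.of (fun i j : Fin (n k0) => A ⟨k0, i⟩ ⟨k0, j⟩)) *ᵥ
            (fun i => x ⟨k0, i⟩))) := by
        have hne : (fun i => x ⟨k0, i⟩) ≠ 0 := by
          intro h; exact hq (congrFun h i0)
        have := (Matrix.posDef_iff_dotProduct_mulVec.1 (hD k0)).2 hne
        have hst : star (fun i => x ⟨k0, i⟩) = fun i => x ⟨k0, i⟩ := by ext q; simp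
        rwa [hst] at this
      have hnn : ∀ k : Fin p, 0 ≤ ((fun i => x ⟨k, i⟩) ⬝ᵥ
          ((Matrix.of (fun i j : Fin (n k) => A ⟨k, i⟩ ⟨k, j⟩)) *ᵥ (fun i => x ⟨k, i⟩))) := by
        intro k
        have := (Matrix.posSemidef_iff_dotProduct_mulVec.1 (hD k).posSemidef).2 (fun i => x ⟨k, i⟩)
        have hst : star (fun i => x ⟨k, i⟩) = fun i => x ⟨k, i⟩ := by ext q; simp
        rwa [hst] at this
      have hsum : 0 < ∑ k : Fin p, ((fun i => x ⟨k, i⟩) ⬝ᵥ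
          ((Matrix.of (fun i j : Fin (n k) => A ⟨k, i⟩ ⟨k, j⟩)) *ᵥ (fun i => x ⟨k, i⟩))) :=
        Finset.sum_pos' (fun k _ => hnn k) ⟨k0, Finset.mem_univ k0, hpos⟩
      simpa using hsum
    · -- the block sums do not vanish
      have hq := (Matrix.posDef_iff_dotProduct_mulVec.1 hphi).2 hs
      have hst : star (fun k => ∑ i : Fin (n k), x ⟨k, i⟩)
          = (fun k => ∑ i : Fin (n k), x ⟨k, i⟩) := by ext q; simp
      rw [hst] at hq
      exact add_pos_of_pos_of_nonneg hq (Finset.sum_nonneg fun k _ => hBnn k)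
end

section
/- Let A be the n×n parametric block correlation matrix with diagonal blocks A_{k,k} = I_{n_k} + b_k(J_{n_k} − I_{n_k}) and constant off-diagonal blocks A_{k,ℓ} = c_{k,ℓ}·J_{n_k×n_ℓ}, with all parameters b_k, c_{k,ℓ} in (−1,1). Then A is positive definite if and only if the p×p block average matrix φ(A), whose diagonal entries are α_k = (1 + (n_k−1)b_k)/n_k and off-diagonal entries are c_{k,ℓ}, is positive definite. -/
open Matrix Finset

private lemma diag_quad (m : ℕ) (β : ℝ) (y : Fin m → ℝ) :
    ∑ i, ∑ j, y i * ((if i = j then 1 else β) * y j)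
      = (1 - β) * ∑ i, (y i)^2 + β * (∑ i, y i)^2 := by
  have key : ∀ i j : Fin m, y i * ((if i = j then (1:ℝ) else β) * y j)
      = β * (y i * y j) + (if j = i then (1-β) * (y i * y i) else 0) := by
    intro i j; by_cases h : i = j <;> simp [h, eq_comm] <;> ring
  simp only [key, Finset.sum_add_distrib, Finset.sum_ite_eq', Finset.mem_univ, if_true]
  have h1 : ∑ i : Fin m, ∑ j : Fin m, β * (y i * y j) = β * (∑ i, y i) ^ 2 := by
    rw [sq, Finset.sum_mul_sum, Finset.mul_sum]
    exact Finset.sum_congr rfl fun i _ => by rw [Finset.mul_sum]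
  have h2 : ∑ i : Fin m, (1 - β) * (y i * y i) = (1 - β) * ∑ i, (y i)^2 := by
    rw [Finset.mul_sum]; exact Finset.sum_congr rfl fun i _ => by ring
  rw [h1, h2]; ring

private lemma sigma_sum {p : ℕ} {n : Fin p → ℕ} (f : ((k : Fin p) × Fin (n k)) → ℝ) :
    ∑ a : (k : Fin p) × Fin (n k), f a = ∑ k, ∑ i, f ⟨k, i⟩ := by
  rw [← Finset.univ_sigma_univ, Finset.sum_sigma]

private lemma var_sum (m : ℕ) (hm : (m:ℝ) ≠ 0) (y : Fin m → ℝ) :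
    ∑ i, (y i - (∑ j, y j)/m)^2 = ∑ i, (y i)^2 - (∑ j, y j)^2 / m := by
  have key : ∀ i, (y i - (∑ j, y j)/m)^2
      = (y i)^2 - 2*((∑ j, y j)/m) * y i + ((∑ j, y j)/m)^2 := by
    intro i; ring
  simp only [key, Finset.sum_add_distrib, Finset.sum_sub_distrib, ← Finset.mul_sum,
    Finset.sum_const, card_univ, Fintype.card_fin, nsmul_eq_mul]
  field_simp
  ring

section main
variable (p : ℕ) (n : Fin p → ℕ) (b : Fin p → ℝ) (c : Fin p → Fin p → ℝ)
variable (A : Matrix ((k : Fin p) × Fin (n k)) ((k : Fin p) × Fin (n k)) ℝ)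

private lemma Aquad
    (hA : ∀ x y : (k : Fin p) × Fin (n k),
      A x y = if x = y then 1 else if x.1 = y.1 then b x.1 else c x.1 y.1)
    (x : ((k : Fin p) × Fin (n k)) → ℝ) :
    x ⬝ᵥ A *ᵥ x = ∑ k, ∑ l,
      (if k = l then (1 - b k) * (∑ i, (x ⟨k,i⟩)^2) + b k * (∑ i, x ⟨k,i⟩)^2
       else c k l * ((∑ i, x ⟨k,i⟩) * (∑ j, x ⟨l,j⟩))) := by
  have e0 : x ⬝ᵥ A *ᵥ x
      = ∑ a : (k : Fin p) × Fin (n k), ∑ a' : (k : Fin p) × Fin (n k),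
          x a * (A a a' * x a') := by
    simp [dotProduct, mulVec, Finset.mul_sum]
  rw [e0, sigma_sum]
  have e1 : ∀ k i, (∑ a' : (k : Fin p) × Fin (n k), x ⟨k,i⟩ * (A ⟨k,i⟩ a' * x a'))
      = ∑ l, ∑ j, x ⟨k,i⟩ * (A ⟨k,i⟩ ⟨l,j⟩ * x ⟨l,j⟩) := fun k i => sigma_sum _
  simp only [e1]
  rw [show (∑ k, ∑ i, ∑ l, ∑ j, x ⟨k,i⟩ * (A ⟨k,i⟩ ⟨l,j⟩ * x ⟨l,j⟩))
      = ∑ k, ∑ l, ∑ i, ∑ j, x ⟨k,i⟩ * (A ⟨k,i⟩ ⟨l,j⟩ * x ⟨l,j⟩)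
    from Finset.sum_congr rfl fun k _ => Finset.sum_comm]
  refine Finset.sum_congr rfl fun k _ => Finset.sum_congr rfl fun l _ => ?_
  by_cases hkl : k = l
  · subst hkl
    simp only [if_pos rfl]
    have : ∀ i j : Fin (n k), A ⟨k,i⟩ ⟨k,j⟩ = if i = j then 1 else b k := by
      intro i j
      rw [hA]
      by_cases h : i = j
      · simp [h]
      · simp [h, Sigma.mk.inj_iff]
    simp only [this]
    exact diag_quad (n k) (b k) (fun i => x ⟨k, i⟩)
  · simp only [if_neg hkl]
    have : ∀ (i : Fin (n k)) (j : Fin (n l)), A ⟨k,i⟩ ⟨l,j⟩ = c k l := by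
      intro i j
      rw [hA]
      simp [Sigma.mk.inj_iff, hkl]
    simp only [this]
    rw [Finset.sum_mul_sum (f := fun i => x ⟨k,i⟩) (g := fun j => x ⟨l,j⟩), Finset.mul_sum]
    exact Finset.sum_congr rfl fun i _ => by rw [Finset.mul_sum]; exact Finset.sum_congr rfl fun j _ => by ring

private lemma phiquad (v : Fin p → ℝ) :
    v ⬝ᵥ (Matrix.of (fun k l : Fin p =>
        if k = l then (1 + ((n k : ℝ) - 1) * b k) / (n k : ℝ) else c k l)) *ᵥ v
      = ∑ k, ∑ l, (if k = l then (1 + ((n k : ℝ) - 1) * b k) / (n k : ℝ) * (v k)^2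
          else c k l * (v k * v l)) := by
  simp only [dotProduct, mulVec, of_apply, Finset.mul_sum]
  refine Finset.sum_congr rfl fun k _ => Finset.sum_congr rfl fun l _ => ?_
  by_cases h : k = l <;> simp [h] <;> ring

/-- The key identity. -/
private lemma key_identity (hn : ∀ k, 0 < n k)
    (hA : ∀ x y : (k : Fin p) × Fin (n k),
      A x y = if x = y then 1 else if x.1 = y.1 then b x.1 else c x.1 y.1)
    (x : ((k : Fin p) × Fin (n k)) → ℝ) :
    x ⬝ᵥ A *ᵥ x
      = (∑ k, (1 - b k) * ∑ i, (x ⟨k,i⟩ - (∑ j, x ⟨k,j⟩)/(n k))^2)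
        + (fun k => ∑ i, x ⟨k,i⟩) ⬝ᵥ (Matrix.of (fun k l : Fin p =>
            if k = l then (1 + ((n k : ℝ) - 1) * b k) / (n k : ℝ) else c k l)) *ᵥ
          (fun k => ∑ i, x ⟨k,i⟩) := by
  rw [Aquad p n b c A hA x, phiquad, ← Finset.sum_add_distrib]
  refine Finset.sum_congr rfl fun k _ => ?_
  rw [show ∀ f : Fin p → ℝ, ∑ l, f l = f k + ∑ l ∈ univ.erase k, f l
      from fun f => (Finset.add_sum_erase univ f (mem_univ k)).symm]
  rw [show ∀ f : Fin p → ℝ, ∑ l, f l = f k + ∑ l ∈ univ.erase k, f l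
      from fun f => (Finset.add_sum_erase univ f (mem_univ k)).symm]
  have herase : ∀ l ∈ univ.erase k,
      (if k = l then (1 - b k) * (∑ i, (x ⟨k,i⟩)^2) + b k * (∑ i, x ⟨k,i⟩)^2
       else c k l * ((∑ i, x ⟨k,i⟩) * (∑ j, x ⟨l,j⟩)))
      = (if k = l then (1 + ((n k : ℝ) - 1) * b k) / (n k : ℝ) * ((∑ i, x ⟨k,i⟩))^2
          else c k l * ((∑ i, x ⟨k,i⟩) * (∑ i, x ⟨l,i⟩))) := by
    intro l hl
    rw [if_neg, if_neg]
    · exact fun h => (Finset.mem_erase.1 hl).1 h.symm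
    · exact fun h => (Finset.mem_erase.1 hl).1 h.symm
  rw [Finset.sum_congr rfl herase]
  simp only [if_pos rfl, if_true]
  have hnum : ((n k : ℝ)) ≠ 0 := Nat.cast_ne_zero.2 (hn k).ne'
  rw [var_sum (n k) hnum (fun i => x ⟨k,i⟩)]
  field_simp
  ring

end main


open Matrix in
/-- Theorem 2: a parametric block correlation matrix `A ∈ B(p)` (CS diagonal
blocks with parameters `b_k`, constant off-diagonal blocks `c_{k,ℓ}`) is
positive definite iff the block average matrix `φ(A)` (diagonal entries
`α_k = (1+(n_k-1)b_k)/n_k`, off-diagonal entries `c_{k,ℓ}`) is positive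
definite. -/
theorem blockClass_posDef_iff_average (p : ℕ) (n : Fin p → ℕ) (hn : ∀ k, 0 < n k)
    (b : Fin p → ℝ) (hb : ∀ k, -1 < b k ∧ b k < 1) (hb1 : ∀ k, n k = 1 → b k = 0)
    (c : Fin p → Fin p → ℝ) (hcsymm : ∀ k l, c k l = c l k)
    (hc : ∀ k l, k ≠ l → -1 < c k l ∧ c k l < 1)
    (A : Matrix ((k : Fin p) × Fin (n k)) ((k : Fin p) × Fin (n k)) ℝ)
    (hA : ∀ x y : (k : Fin p) × Fin (n k),
      A x y = if x = y then 1 else if x.1 = y.1 then b x.1 else c x.1 y.1) :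
    A.PosDef ↔
      (Matrix.of (fun k l : Fin p =>
        if k = l then (1 + ((n k : ℝ) - 1) * b k) / (n k : ℝ) else c k l)).PosDef := by
  set Φ := Matrix.of (fun k l : Fin p =>
        if k = l then (1 + ((n k : ℝ) - 1) * b k) / (n k : ℝ) else c k l) with hΦ
  have hnum : ∀ k, ((n k : ℝ)) ≠ 0 := fun k => Nat.cast_ne_zero.2 (hn k).ne'
  have hΦH : Φ.IsHermitian := by
    ext k l
    rw [conjTranspose_apply, star_trivial, hΦ, of_apply, of_apply]
    by_cases h : k = l
    · simp [h]
    · rw [if_neg (Ne.symm h), if_neg h, hcsymm]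
  have hAH : A.IsHermitian := by
    ext a a'
    rw [conjTranspose_apply, star_trivial, hA, hA]
    by_cases h : a = a'
    · simp [h]
    · rw [if_neg h, if_neg (Ne.symm h)]
      by_cases h1 : a.1 = a'.1
      · rw [if_pos h1, if_pos h1.symm, h1]
      · rw [if_neg h1, if_neg (Ne.symm h1), hcsymm]
  constructor
  · intro hApd
    refine posDef_iff_dotProduct_mulVec.2 ⟨hΦH, ?_⟩
    intro v hv
    set x : ((k : Fin p) × Fin (n k)) → ℝ := fun a => v a.1 / n a.1 with hxdef
    have hS : ∀ k, ∑ i : Fin (n k), x ⟨k, i⟩ = v k := by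
      intro k
      simp only [hxdef, Finset.sum_const, card_univ, Fintype.card_fin, nsmul_eq_mul]
      field_simp
      rw [mul_comm, mul_div_assoc, div_self (hnum k), mul_one]
    have hx0 : x ≠ 0 := by
      obtain ⟨k, hk⟩ := Function.ne_iff.1 hv
      intro h0
      have : x ⟨k, ⟨0, hn k⟩⟩ = 0 := congrFun h0 _
      exact div_ne_zero hk (hnum k) this
    have hpos := (posDef_iff_dotProduct_mulVec.1 hApd).2 hx0
    rw [star_trivial, key_identity p n b c A hn hA x] at hpos
    have hvar : ∀ k, (1 - b k) * ∑ i : Fin (n k), (x ⟨k,i⟩ - (∑ j, x ⟨k,j⟩)/(n k))^2 = 0 := by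
      intro k
      rw [hS k]
      have : ∀ i : Fin (n k), (x ⟨k,i⟩ - v k / (n k))^2 = 0 := by
        intro i; simp [hxdef]
      simp [this]
    rw [Finset.sum_eq_zero (fun k _ => hvar k), zero_add,
      show (fun k => ∑ i, x ⟨k,i⟩) = v from funext hS] at hpos
    rwa [star_trivial]
  · intro hΦpd
    refine posDef_iff_dotProduct_mulVec.2 ⟨hAH, ?_⟩
    intro x hx
    rw [star_trivial, key_identity p n b c A hn hA x]
    set S : Fin p → ℝ := fun k => ∑ i, x ⟨k, i⟩ with hSdef
    have hvar_nonneg : ∀ k ∈ univ,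
        (0:ℝ) ≤ (1 - b k) * ∑ i : Fin (n k), (x ⟨k,i⟩ - S k/(n k))^2 :=
      fun k _ => mul_nonneg (by linarith [(hb k).2]) (Finset.sum_nonneg fun i _ => sq_nonneg _)
    by_cases hcase : ∀ a : (k : Fin p) × Fin (n k), x a = S a.1 / (n a.1)
    · have hS0 : S ≠ 0 := by
        intro h0
        apply hx
        funext a
        rw [hcase a, congrFun h0 a.1]
        simp
      have hpos := (posDef_iff_dotProduct_mulVec.1 hΦpd).2 hS0
      rw [star_trivial] at hpos
      exact add_pos_of_nonneg_of_pos (Finset.sum_nonneg hvar_nonneg) hpos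
    · push_neg at hcase
      obtain ⟨a, ha⟩ := hcase
      have hsemi := hΦpd.posSemidef.dotProduct_mulVec_nonneg S
      rw [star_trivial] at hsemi
      refine add_pos_of_pos_of_nonneg (Finset.sum_pos' hvar_nonneg ⟨a.1, mem_univ _, ?_⟩) hsemi
      refine mul_pos (by linarith [(hb a.1).2]) (Finset.sum_pos' (fun i _ => sq_nonneg _)
        ⟨a.2, mem_univ _, ?_⟩)
      have : x ⟨a.1, a.2⟩ - S a.1 / (n a.1) ≠ 0 := by
        rw [Sigma.eta]
        exact sub_ne_zero.2 ha
      exact sq_pos_of_ne_zero this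
end

section
/- Let d_p(c) = det(B(c)) where B(c) has diagonal entries 0 < α_1 ≤ … ≤ α_p < 1 and off-diagonal entries c, with p ≥ 2. Then d_p has exactly p real roots r_{p,1} ≤ r_{p,2} ≤ … ≤ r_{p,p}, interlaced as r_{p,1} < 0 < α_1 ≤ r_{p,2} ≤ α_2 ≤ … ≤ r_{p,p} ≤ α_p < 1. -/
open Polynomial Finset Matrix Filter Topology

namespace DetRootsAux



noncomputable def Qpoly (p : ℕ) (α : Fin p → ℝ) : ℝ[X] :=
  X * derivative (∏ k, (X - C (α k))) - ∏ k, (X - C (α k))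

lemma deriv_prod_X_sub {ι : Type*} [DecidableEq ι] (s : Finset ι) (a : ι → ℝ) :
    derivative (∏ i ∈ s, (X - C (a i))) = ∑ i ∈ s, ∏ j ∈ s.erase i, (X - C (a j)) := by
  induction s using Finset.induction with
  | empty => simp
  | @insert i s hi ih =>
    rw [Finset.prod_insert hi, derivative_mul, derivative_sub, derivative_X, derivative_C,
      sub_zero, one_mul, ih, Finset.sum_insert hi, Finset.erase_insert hi, Finset.mul_sum]
    congr 1
    refine Finset.sum_congr rfl fun j hj => ?_
    rw [Finset.erase_insert_of_ne (show i ≠ j from fun h => hi (h ▸ hj)),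
      Finset.prod_insert (fun h => hi (Finset.mem_of_mem_erase h))]

lemma evalQ (p : ℕ) (α : Fin p → ℝ) (c : ℝ) :
    (Qpoly p α).eval c
      = c * ∑ k, ∏ j ∈ univ.erase k, (c - α j) - ∏ k, (c - α k) := by
  simp [Qpoly, deriv_prod_X_sub, eval_prod, eval_finset_sum]


lemma prod_neg_form {ι : Type*} (s : Finset ι) (f : ι → ℝ) :
    ∏ i ∈ s, (-f i) = (-1 : ℝ) ^ s.card * ∏ i ∈ s, f i := by
  rw [← Finset.prod_const, ← Finset.prod_mul_distrib]
  simp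

lemma det_eq_off (p : ℕ) (α : Fin p → ℝ) (c : ℝ) (hc : ∀ k, α k ≠ c) :
    (Matrix.of (fun k l : Fin p => if k = l then α k else c)).det
      = ∏ k, (α k - c) + c * ∑ k, ∏ j ∈ univ.erase k, (α j - c) := by
  classical
  have hM : (Matrix.of (fun k l : Fin p => if k = l then α k else c))
      = Matrix.diagonal (fun k => α k - c)
        + Matrix.replicateCol Unit (fun _ : Fin p => c) * Matrix.replicateRow Unit (fun _ : Fin p => (1 : ℝ)) := by
    ext k l
    by_cases h : k = l
    · subst h
      simp [Matrix.add_apply, Matrix.mul_apply, Matrix.diagonal_apply_eq]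
    · simp [Matrix.of_apply, h, Matrix.add_apply, Matrix.diagonal_apply_ne _ h,
        Matrix.mul_apply]
  have hdet : (Matrix.diagonal (fun k : Fin p => α k - c)).det = ∏ k, (α k - c) := by
    simp [Matrix.det_diagonal]
  have hunit : IsUnit (Matrix.diagonal (fun k : Fin p => α k - c)).det := by
    rw [hdet]
    exact (Finset.prod_ne_zero_iff.2 fun k _ => sub_ne_zero.2 (hc k)).isUnit
  have hinv : (Matrix.diagonal (fun k : Fin p => α k - c))⁻¹
      = Matrix.diagonal (fun k => (α k - c)⁻¹) := by
    refine Matrix.inv_eq_right_inv ?_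
    rw [Matrix.diagonal_mul_diagonal]
    have : (fun k : Fin p => (α k - c) * (α k - c)⁻¹) = fun _ => (1:ℝ) := by
      funext k
      exact mul_inv_cancel₀ (sub_ne_zero.2 (hc k))
    rw [this, Matrix.diagonal_one]
  have hentry : ((1 + Matrix.replicateRow Unit (fun _ : Fin p => (1:ℝ))
      * (Matrix.diagonal (fun k : Fin p => (α k - c)⁻¹))
      * Matrix.replicateCol Unit (fun _ : Fin p => c) : Matrix Unit Unit ℝ)).det
      = 1 + ∑ k, (α k - c)⁻¹ * c := by
    rw [Matrix.det_unique]
    simp [Matrix.add_apply, Matrix.mul_apply, Matrix.one_apply, Matrix.diagonal,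
      Finset.sum_mul, mul_comm]
  rw [hM, Matrix.det_add_replicateCol_mul_replicateRow hunit, hdet, hinv, hentry,
    mul_add, mul_one, Finset.mul_sum, Finset.mul_sum]
  congr 1
  refine Finset.sum_congr rfl fun k _ => ?_
  rw [← Finset.mul_prod_erase univ _ (Finset.mem_univ k)]
  have h1 : α k - c ≠ 0 := sub_ne_zero.2 (hc k)
  field_simp


lemma evalQ' (p : ℕ) (hp : 1 ≤ p) (α : Fin p → ℝ) (c : ℝ) :
    (-1:ℝ)^(p-1) * (Qpoly p α).eval c
      = ∏ k, (α k - c) + c * ∑ k, ∏ j ∈ univ.erase k, (α j - c) := by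
  have e1 : ∀ k : Fin p, ∏ j ∈ univ.erase k, (c - α j)
      = (-1:ℝ)^(p-1) * ∏ j ∈ univ.erase k, (α j - c) := by
    intro k
    calc ∏ j ∈ univ.erase k, (c - α j) = ∏ j ∈ univ.erase k, -(α j - c) :=
          Finset.prod_congr rfl fun j _ => by ring
      _ = (-1:ℝ)^((univ.erase k).card) * ∏ j ∈ univ.erase k, (α j - c) := prod_neg_form _ _
      _ = _ := by
          rw [Finset.card_erase_of_mem (Finset.mem_univ k), Finset.card_univ, Fintype.card_fin]
  have e2 : ∏ k : Fin p, (c - α k) = (-1:ℝ)^p * ∏ k, (α k - c) := by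
    calc ∏ k : Fin p, (c - α k) = ∏ k : Fin p, -(α k - c) :=
          Finset.prod_congr rfl fun j _ => by ring
      _ = (-1:ℝ)^(univ : Finset (Fin p)).card * ∏ k, (α k - c) := prod_neg_form _ _
      _ = _ := by rw [Finset.card_univ, Fintype.card_fin]
  have e3 : ∑ k : Fin p, ∏ j ∈ univ.erase k, (c - α j)
      = (-1:ℝ)^(p-1) * ∑ k, ∏ j ∈ univ.erase k, (α j - c) := by
    rw [Finset.mul_sum]; exact Finset.sum_congr rfl fun k _ => e1 k
  rw [evalQ, e2, e3]
  obtain ⟨q, rfl⟩ : ∃ q, p = q + 1 := ⟨p - 1, by omega⟩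
  simp only [Nat.add_sub_cancel]
  have hpow1 : (-1:ℝ)^q * (-1:ℝ)^q = 1 := by
    rw [← pow_add]; exact Even.neg_one_pow ⟨q, rfl⟩
  have hpow2 : (-1:ℝ)^q * (-1:ℝ)^(q+1) = -1 := by
    rw [pow_succ, ← mul_assoc, hpow1, one_mul]
  linear_combination (c * ∑ k : Fin (q+1), ∏ j ∈ univ.erase k, (α j - c)) * hpow1
    - (∏ k : Fin (q+1), (α k - c)) * hpow2

lemma det_eq (p : ℕ) (hp : 1 ≤ p) (α : Fin p → ℝ) (c : ℝ) :
    (Matrix.of (fun k l : Fin p => if k = l then α k else c)).det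
      = (-1:ℝ)^(p-1) * (Qpoly p α).eval c := by
  have hd : Dense ((Set.range α)ᶜ : Set ℝ) :=
    (Set.finite_range α).countable.dense_compl ℝ
  have hf : Continuous fun c : ℝ =>
      (Matrix.of (fun k l : Fin p => if k = l then α k else c)).det := by
    refine Continuous.matrix_det ?_
    refine continuous_pi fun k => continuous_pi fun l => ?_
    by_cases h : k = l
    · simpa [Matrix.of_apply, h] using (continuous_const : Continuous fun _ : ℝ => α l)
    · simpa [Matrix.of_apply, h] using (continuous_id' : Continuous fun c : ℝ => c)
  have hg : Continuous fun c : ℝ => (-1:ℝ)^(p-1) * (Qpoly p α).eval c :=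
    continuous_const.mul (Qpoly p α).continuous
  have heq : Set.EqOn (fun c : ℝ =>
      (Matrix.of (fun k l : Fin p => if k = l then α k else c)).det)
      (fun c : ℝ => (-1:ℝ)^(p-1) * (Qpoly p α).eval c) ((Set.range α)ᶜ) := by
    intro c hc
    have hc' : ∀ k, α k ≠ c := fun k h => hc ⟨k, h⟩
    simp only
    rw [det_eq_off p α c hc', evalQ' p hp]
  exact congrFun (Continuous.ext_on hd hf hg heq) c


section Degree
variable (p : ℕ) (α : Fin p → ℝ)

lemma Pmonic : (∏ k, (X - C (α k)) : ℝ[X]).Monic :=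
  monic_prod_of_monic _ _ fun k _ => monic_X_sub_C _

lemma Pdeg : (∏ k, (X - C (α k)) : ℝ[X]).natDegree = p := by
  rw [natDegree_prod _ _ fun k _ => X_sub_C_ne_zero (α k)]
  simp

lemma Qcoeff (hp : 1 ≤ p) : (Qpoly p α).coeff p = (p : ℝ) - 1 := by
  obtain ⟨q, rfl⟩ : ∃ q, p = q + 1 := ⟨p - 1, by omega⟩
  have hP : (∏ k, (X - C (α k)) : ℝ[X]).coeff (q + 1) = 1 := by
    have := (Pmonic (q + 1) α).coeff_natDegree
    rwa [Pdeg] at this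
  have hder : (derivative (∏ k, (X - C (α k)) : ℝ[X])).coeff q = ((q : ℝ) + 1) := by
    rw [coeff_derivative, hP, one_mul]
  rw [Qpoly, coeff_sub, coeff_X_mul, hder, hP]
  push_cast
  ring

lemma Qdegle (hp : 1 ≤ p) : (Qpoly p α).natDegree ≤ p := by
  refine le_trans (natDegree_sub_le _ _) (max_le ?_ ?_)
  · refine le_trans (natDegree_mul_le) ?_
    have h1 := natDegree_derivative_le (∏ k, (X - C (α k)) : ℝ[X])
    rw [Pdeg] at h1
    rw [natDegree_X]
    exact le_trans (Nat.add_le_add_left h1 1) (by omega)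
  · exact le_of_eq (Pdeg p α)

lemma Qne (hp : 2 ≤ p) : Qpoly p α ≠ 0 := by
  intro h
  have := Qcoeff p α (by omega)
  rw [h, coeff_zero] at this
  have : (1:ℝ) < (p:ℝ) := by exact_mod_cast hp
  linarith [this, Qcoeff p α (by omega : 1 ≤ p)]

lemma Qdeg (hp : 2 ≤ p) : (Qpoly p α).natDegree = p := by
  refine le_antisymm (Qdegle p α (by omega)) (le_natDegree_of_ne_zero ?_)
  rw [Qcoeff p α (by omega)]
  have : (1:ℝ) < (p:ℝ) := by exact_mod_cast hp
  intro h; linarith [h]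

lemma Qlead (hp : 2 ≤ p) : (Qpoly p α).leadingCoeff = (p:ℝ) - 1 := by
  rw [leadingCoeff, Qdeg p α hp, Qcoeff p α (by omega)]

end Degree


section Eval
variable (p : ℕ) (α : Fin p → ℝ)

lemma evalQ_alpha (k : Fin p) :
    (Qpoly p α).eval (α k) = α k * ∏ j ∈ univ.erase k, (α k - α j) := by
  have hP0 : (∏ m, (X - C (α m)) : ℝ[X]).eval (α k) = 0 := by
    rw [eval_prod]
    exact Finset.prod_eq_zero (Finset.mem_univ k) (by simp)
  have hder : (derivative (∏ m, (X - C (α m)) : ℝ[X])).eval (α k)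
      = ∏ j ∈ univ.erase k, (α k - α j) := by
    rw [deriv_prod_X_sub, eval_finset_sum]
    rw [Finset.sum_eq_single k]
    · simp [eval_prod]
    · intro m _ hm
      rw [eval_prod]
      refine Finset.prod_eq_zero (Finset.mem_erase.2 ⟨Ne.symm hm, Finset.mem_univ k⟩) (by simp)
    · intro h; exact absurd (Finset.mem_univ k) h
  simp [Qpoly, hP0, hder]

lemma sign_at_alpha (hsm : StrictMono α) (hpos : ∀ k, 0 < α k) (k : Fin p) :
    0 < (-1:ℝ) ^ (p - 1 - (k:ℕ)) * (Qpoly p α).eval (α k) := by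
  have hsplit : univ.erase k = Finset.Iio k ∪ Finset.Ioi k := by
    ext j
    simp only [Finset.mem_erase, Finset.mem_univ, and_true, Finset.mem_union,
      Finset.mem_Iio, Finset.mem_Ioi]
    exact ne_iff_lt_or_gt
  have hdisj : Disjoint (Finset.Iio k) (Finset.Ioi k) :=
    Finset.disjoint_left.2 fun j hj hj' =>
      absurd (Finset.mem_Ioi.1 hj') (not_lt.2 (le_of_lt (Finset.mem_Iio.1 hj)))
  have h1 : 0 < ∏ j ∈ Finset.Iio k, (α k - α j) :=
    Finset.prod_pos fun j hj => sub_pos.2 (hsm (Finset.mem_Iio.1 hj))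
  have h3 : 0 < ∏ j ∈ Finset.Ioi k, (α j - α k) :=
    Finset.prod_pos fun j hj => sub_pos.2 (hsm (Finset.mem_Ioi.1 hj))
  have h2 : ∏ j ∈ Finset.Ioi k, (α k - α j)
      = (-1:ℝ) ^ (p - 1 - (k:ℕ)) * ∏ j ∈ Finset.Ioi k, (α j - α k) := by
    calc ∏ j ∈ Finset.Ioi k, (α k - α j) = ∏ j ∈ Finset.Ioi k, -(α j - α k) :=
          Finset.prod_congr rfl fun j _ => by ring
      _ = (-1:ℝ) ^ (Finset.Ioi k).card * ∏ j ∈ Finset.Ioi k, (α j - α k) := prod_neg_form _ _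
      _ = _ := by rw [Fin.card_Ioi]
  have hpow : (-1:ℝ) ^ (p - 1 - (k:ℕ)) * (-1:ℝ) ^ (p - 1 - (k:ℕ)) = 1 := by
    rw [← pow_add]
    exact Even.neg_one_pow ⟨p - 1 - (k:ℕ), rfl⟩
  have key : (-1:ℝ) ^ (p - 1 - (k:ℕ)) * (Qpoly p α).eval (α k)
      = α k * ((∏ j ∈ Finset.Iio k, (α k - α j)) * ∏ j ∈ Finset.Ioi k, (α j - α k)) := by
    rw [evalQ_alpha, hsplit, Finset.prod_union hdisj, h2]
    linear_combination (α k * (∏ j ∈ Finset.Iio k, (α k - α j))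
      * ∏ j ∈ Finset.Ioi k, (α j - α k)) * hpow
  rw [key]
  exact mul_pos (hpos k) (mul_pos h1 h3)

lemma root_mid (hsm : StrictMono α) (hpos : ∀ k, 0 < α k) (i : Fin p) (hi : 0 < (i:ℕ)) :
    ∃ x, α ⟨(i:ℕ) - 1, by omega⟩ < x ∧ x < α i ∧ (Qpoly p α).eval x = 0 := by
  set k : Fin p := ⟨(i:ℕ) - 1, by omega⟩ with hk
  have hki : k < i := by
    rw [Fin.lt_def]; simp [hk]; omega
  set e := p - 1 - (i:ℕ) with he
  have hgb := sign_at_alpha p α hsm hpos i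
  have hga := sign_at_alpha p α hsm hpos k
  have hek : p - 1 - (k:ℕ) = e + 1 := by
    have : (k:ℕ) = (i:ℕ) - 1 := rfl
    omega
  rw [hek, pow_succ] at hga
  set g : ℝ → ℝ := fun x => (-1:ℝ) ^ e * (Qpoly p α).eval x with hg
  have hcont : ContinuousOn g (Set.Icc (α k) (α i)) :=
    (continuous_const.mul (Qpoly p α).continuous).continuousOn
  have h0mem : (0:ℝ) ∈ Set.Ioo (g (α k)) (g (α i)) := by
    constructor
    · -- g (α k) < 0
      have hrw : (-1:ℝ)^e * -1 * (Qpoly p α).eval (α k)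
          = -((-1:ℝ)^e * (Qpoly p α).eval (α k)) := by ring
      rw [hrw] at hga
      show g (α k) < 0
      rw [hg]
      simp only
      linarith
    · exact hgb
  obtain ⟨x, hx, hgx⟩ := intermediate_value_Ioo (le_of_lt (hsm hki)) hcont h0mem
  refine ⟨x, hx.1, hx.2, ?_⟩
  have hne : (-1:ℝ) ^ e ≠ 0 := pow_ne_zero _ (by norm_num)
  have := hgx
  rw [hg] at this
  simp only at this
  rcases mul_eq_zero.1 this with h | h
  · exact absurd h hne
  · exact h

lemma root_neg (hp : 2 ≤ p) (hpos : ∀ k, 0 < α k) :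
    ∃ x, x < 0 ∧ (Qpoly p α).eval x = 0 := by
  have hQ0 : (-1:ℝ) ^ p * (Qpoly p α).eval 0 = -∏ k, α k := by
    have h1 : (Qpoly p α).eval 0 = -∏ k : Fin p, (0 - α k) := by
      simp [Qpoly, eval_prod]
    have h2 : ∏ k : Fin p, ((0:ℝ) - α k) = (-1:ℝ)^p * ∏ k, α k := by
      calc ∏ k : Fin p, ((0:ℝ) - α k) = ∏ k : Fin p, -(α k) :=
            Finset.prod_congr rfl fun j _ => by ring
        _ = (-1:ℝ)^(univ : Finset (Fin p)).card * ∏ k, α k := prod_neg_form _ _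
        _ = _ := by rw [Finset.card_univ, Fintype.card_fin]
    have hpow : (-1:ℝ)^p * (-1:ℝ)^p = 1 := by
      rw [← pow_add]; exact Even.neg_one_pow ⟨p, rfl⟩
    rw [h1, h2]
    linear_combination (- ∏ k, α k) * hpow
  have hQ0neg : (-1:ℝ) ^ p * (Qpoly p α).eval 0 < 0 := by
    rw [hQ0]
    have : 0 < ∏ k, α k := Finset.prod_pos fun k _ => hpos k
    linarith
  -- find a point far to the left where (-1)^p * Q is positive
  set R : ℝ[X] := C ((-1:ℝ)^p) * (Qpoly p α).comp (-X) with hR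
  have hcompne : (Qpoly p α).comp (-X) ≠ 0 := by
    intro h
    have := Qne p α hp
    rw [comp_eq_zero_iff] at h
    rcases h with h | h
    · exact this h
    · simp at h
  have hRlead : R.leadingCoeff = (p:ℝ) - 1 := by
    rw [hR, leadingCoeff_mul, leadingCoeff_C,
      leadingCoeff_comp (by simp [natDegree_neg] : (-X : ℝ[X]).natDegree ≠ 0)]
    rw [Qlead p α hp, Qdeg p α hp]
    have : (-X : ℝ[X]).leadingCoeff = -1 := by
      rw [leadingCoeff_neg, leadingCoeff_X]
    rw [this]
    have hpow : (-1:ℝ)^p * (-1:ℝ)^p = 1 := by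
      rw [← pow_add]; exact Even.neg_one_pow ⟨p, rfl⟩
    linear_combination ((p:ℝ) - 1) * hpow
  have hRne : R ≠ 0 := by
    intro h
    rw [h, leadingCoeff_zero] at hRlead
    have : (1:ℝ) < (p:ℝ) := by exact_mod_cast hp
    linarith
  have hRdeg : R.natDegree = p := by
    rw [hR, natDegree_mul (by simp : (C ((-1:ℝ)^p) : ℝ[X]) ≠ 0) hcompne,
      natDegree_C, natDegree_comp, Qdeg p α hp]
    simp [natDegree_neg]
  have hRdeg' : 0 < R.degree := by
    rw [degree_eq_natDegree hRne, hRdeg]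
    exact_mod_cast (by omega : 0 < p)
  have hlead_pos : (0:ℝ) ≤ R.leadingCoeff := by
    rw [hRlead]
    have h1 : (1:ℝ) < (p:ℝ) := by exact_mod_cast hp
    linarith
  have htends := R.tendsto_atTop_of_leadingCoeff_nonneg hRdeg' hlead_pos
  have hev : ∀ᶠ t in Filter.atTop, (1:ℝ) ≤ R.eval t := htends.eventually_ge_atTop 1
  obtain ⟨t, ht1, ht2⟩ := (hev.and (Filter.eventually_ge_atTop (1:ℝ))).exists
  have hReval : R.eval t = (-1:ℝ)^p * (Qpoly p α).eval (-t) := by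
    rw [hR, eval_mul, eval_C, eval_comp]
    simp
  set g : ℝ → ℝ := fun x => (-1:ℝ) ^ p * (Qpoly p α).eval x with hg
  have hcont : ContinuousOn g (Set.Icc (-t) 0) :=
    (continuous_const.mul (Qpoly p α).continuous).continuousOn
  have h0mem : (0:ℝ) ∈ Set.Ioo (g 0) (g (-t)) := by
    constructor
    · exact hQ0neg
    · rw [hg]; simp only; rw [← hReval]; linarith
  obtain ⟨x, hx, hgx⟩ := intermediate_value_Ioo' (by linarith : -t ≤ 0) hcont h0mem
  refine ⟨x, hx.2, ?_⟩
  have hne : (-1:ℝ) ^ p ≠ 0 := pow_ne_zero _ (by norm_num)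
  rcases mul_eq_zero.1 hgx with h | h
  · exact absurd h hne
  · exact h

end Eval

lemma exists_roots_strict (p : ℕ) (hp : 2 ≤ p) (α : Fin p → ℝ) (hsm : StrictMono α)
    (hpos : ∀ k, 0 < α k) :
    ∃ r : Fin p → ℝ, (∀ i j : Fin p, i < j → r i < r j) ∧ (∀ i : Fin p, (i:ℕ) = 0 → r i < 0) ∧
      (∀ i j : Fin p, (j:ℕ) + 1 = (i:ℕ) → α j < r i ∧ r i < α i) ∧
      ∀ c, (Qpoly p α).eval c = ((p:ℝ) - 1) * ∏ i, (c - r i) := by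
  classical
  obtain ⟨x0, hx0neg, hx0root⟩ := root_neg p α hp hpos
  have hmid : ∀ i : Fin p, 0 < (i:ℕ) →
      ∃ x, α ⟨(i:ℕ) - 1, by omega⟩ < x ∧ x < α i ∧ (Qpoly p α).eval x = 0 :=
    fun i hi => root_mid p α hsm hpos i hi
  choose s hs1 hs2 hs3 using hmid
  set r : Fin p → ℝ := fun i => if h : 0 < (i:ℕ) then s i h else x0 with hr
  have hr0 : ∀ i : Fin p, (i:ℕ) = 0 → r i = x0 := by
    intro i hi; rw [hr]; simp [hi]
  have hrpos : ∀ i : Fin p, ∀ h : 0 < (i:ℕ), r i = s i h := by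
    intro i h; rw [hr]; simp [h]
  have hroot : ∀ i, (Qpoly p α).eval (r i) = 0 := by
    intro i
    by_cases h : 0 < (i:ℕ)
    · rw [hrpos i h]; exact hs3 i h
    · rw [hr0 i (by omega)]; exact hx0root
  have hlt_alpha : ∀ i : Fin p, r i < α i := by
    intro i
    by_cases h : 0 < (i:ℕ)
    · rw [hrpos i h]; exact hs2 i h
    · rw [hr0 i (by omega)]; exact lt_trans hx0neg (hpos i)
  have hgt_prev : ∀ i : Fin p, ∀ h : 0 < (i:ℕ), α ⟨(i:ℕ) - 1, by omega⟩ < r i := by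
    intro i h; rw [hrpos i h]; exact hs1 i h
  have hmono : ∀ i j : Fin p, i < j → r i < r j := by
    intro i j hij
    have hj : 0 < (j:ℕ) := by
      have := Fin.lt_def.1 hij; omega
    have h1 : α ⟨(j:ℕ) - 1, by omega⟩ < r j := hgt_prev j hj
    by_cases h : 0 < (i:ℕ)
    · have h2 : r i < α i := hlt_alpha i
      have h3 : α i ≤ α ⟨(j:ℕ) - 1, by omega⟩ := by
        apply hsm.monotone
        rw [Fin.le_def]
        have := Fin.lt_def.1 hij
        simp
        omega
      linarith
    · rw [hr0 i (by omega)]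
      have : 0 < α ⟨(j:ℕ) - 1, by omega⟩ := hpos _
      linarith
  have hinj : Function.Injective r := by
    intro i j hij
    rcases lt_trichotomy i j with h | h | h
    · exact absurd hij (ne_of_lt (hmono i j h))
    · exact h
    · exact absurd hij.symm (ne_of_lt (hmono j i h))
  -- factorization
  have hQne := Qne p α hp
  set M : Multiset ℝ := (univ : Finset (Fin p)).val.map r with hM
  have hMnodup : M.Nodup := Multiset.Nodup.map hinj (univ : Finset (Fin p)).nodup
  have hMle : M ≤ (Qpoly p α).roots := by
    rw [Multiset.le_iff_count]
    intro a
    by_cases ha : a ∈ M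
    · have h1 : M.count a = 1 := (Multiset.count_eq_one_of_mem hMnodup ha)
      rw [h1]
      obtain ⟨i, _, rfl⟩ := Multiset.mem_map.1 ha
      rw [Polynomial.count_roots]
      exact (Polynomial.le_rootMultiplicity_iff hQne).2 (by
        rw [pow_one]
        exact Polynomial.dvd_iff_isRoot.2 (hroot i))
    · rw [Multiset.count_eq_zero_of_notMem ha]
      omega
  have hdvd : (M.map fun a => X - C a).prod ∣ Qpoly p α :=
    (Multiset.prod_X_sub_C_dvd_iff_le_roots hQne M).2 hMle
  have hprodM : (M.map fun a => X - C a).prod = ∏ i, (X - C (r i)) := by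
    rw [hM, Multiset.map_map]
    rfl
  set A : ℝ[X] := ∏ i, (X - C (r i)) with hA
  have hAm : A.Monic := monic_prod_of_monic _ _ fun k _ => monic_X_sub_C _
  have hAdeg : A.natDegree = p := by
    rw [hA, natDegree_prod _ _ fun k _ => X_sub_C_ne_zero (r k)]
    simp
  rw [hprodM] at hdvd
  obtain ⟨u, hu⟩ := hdvd
  have hune : u ≠ 0 := by
    intro h; rw [h, mul_zero] at hu; exact hQne hu
  have hudeg : u.natDegree = 0 := by
    have := Qdeg p α hp
    rw [hu, natDegree_mul hAm.ne_zero hune, hAdeg] at this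
    omega
  have huC : u = C (u.coeff 0) := eq_C_of_natDegree_eq_zero hudeg
  have hulead : u.coeff 0 = (p:ℝ) - 1 := by
    have h1 : (Qpoly p α).leadingCoeff = A.leadingCoeff * u.leadingCoeff := by
      rw [hu, leadingCoeff_mul]
    rw [Qlead p α hp, hAm.leadingCoeff, one_mul] at h1
    rw [show u.coeff 0 = u.leadingCoeff from by rw [leadingCoeff, hudeg]]
    exact h1.symm
  refine ⟨r, hmono, ?_, ?_, ?_⟩
  · intro i hi; rw [hr0 i hi]; exact hx0neg
  · intro i j hij
    have hi : 0 < (i:ℕ) := by omega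
    have hj : (⟨(i:ℕ) - 1, by omega⟩ : Fin p) = j := by
      apply Fin.ext; simp; omega
    constructor
    · rw [← hj]; exact hgt_prev i hi
    · exact hlt_alpha i
  · intro c
    rw [hu, huC, hulead, eval_mul, eval_C, hA, eval_prod, mul_comm]
    congr 1
    refine Finset.prod_congr rfl fun i _ => by simp


end DetRootsAux

open DetRootsAux Polynomial Finset Filter Topology




/-- For `0 < α_1 ≤ … ≤ α_p < 1` (p ≥ 2), the degree-`p` polynomial
`d_p(c) = det(B(c))` (diagonal entries `α_k`, off-diagonal entries `c`) has
exactly `p` real roots `r_1 ≤ … ≤ r_p` (so that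
`d_p(c) = (-1)^{p-1}(p-1) ∏ (c - r_i)`), interlaced as
`r_1 < 0 < α_1 ≤ r_2 ≤ α_2 ≤ … ≤ r_p ≤ α_p < 1`. -/
theorem det_roots_interlaced (p : ℕ) (hp : 2 ≤ p) (α : Fin p → ℝ)
    (hmono : Monotone α) (hpos : ∀ k, 0 < α k) (hlt : ∀ k, α k < 1) :
    ∃ r : Fin p → ℝ, Monotone r ∧
      (∀ c : ℝ,
        (Matrix.of (fun k l : Fin p => if k = l then α k else c)).det =
          (-1 : ℝ) ^ (p - 1) * ((p : ℝ) - 1) * ∏ i, (c - r i)) ∧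
      r ⟨0, by omega⟩ < 0 ∧
      (0 : ℝ) < α ⟨0, by omega⟩ ∧
      (∀ i j : Fin p, (j : ℕ) + 1 = (i : ℕ) → α j ≤ r i ∧ r i ≤ α i) ∧
      (∀ i, α i < 1) := by
  classical
  set i0 : Fin p := ⟨0, by omega⟩ with hi0
  set kmax : Fin p := ⟨p - 1, by omega⟩ with hkmax
  set a0 : ℝ := α i0 with ha0
  have ha0pos : 0 < a0 := hpos i0
  set δ : ℝ := 1 - α kmax with hδ
  have hδpos : 0 < δ := by
    have := hlt kmax; simp only [hδ]; linarith
  have hmax : ∀ k, α k ≤ α kmax := by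
    intro k
    apply hmono
    rw [Fin.le_def]
    simp only [hkmax]
    omega
  set β : ℕ → Fin p → ℝ := fun n k => α k + (δ / (2 * p)) * (((k:ℕ):ℝ) + 1) * (1 / ((n:ℝ) + 1))
    with hβ
  have hppos : (0:ℝ) < p := by positivity
  have hterm_pos : ∀ n : ℕ, ∀ k : Fin p,
      0 < (δ / (2 * p)) * (((k:ℕ):ℝ) + 1) * (1 / ((n:ℝ) + 1)) := by
    intro n k
    have h1 : (0:ℝ) < ((k:ℕ):ℝ) + 1 := by positivity
    positivity
  have hβge : ∀ n k, α k ≤ β n k := fun n k => le_of_lt (by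
    have := hterm_pos n k; simp only [hβ]; linarith)
  have hβpos : ∀ n, ∀ k, 0 < β n k := fun n k => lt_of_lt_of_le (hpos k) (hβge n k)
  have hβlt1 : ∀ n, ∀ k, β n k < 1 := by
    intro n k
    have h1 : (δ / (2 * p)) * (((k:ℕ):ℝ) + 1) * (1 / ((n:ℝ) + 1)) ≤ δ / 2 := by
      have hk : (((k:ℕ):ℝ) + 1) ≤ (p:ℝ) := by
        have : (k:ℕ) + 1 ≤ p := k.isLt
        exact_mod_cast this
      have hn : (1 / ((n:ℝ) + 1)) ≤ 1 := by
        rw [div_le_one (by positivity)]; linarith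
      calc (δ / (2 * p)) * (((k:ℕ):ℝ) + 1) * (1 / ((n:ℝ) + 1))
          ≤ (δ / (2 * p)) * (p:ℝ) * 1 := by
            apply mul_le_mul (mul_le_mul le_rfl hk (by positivity) (by positivity)) hn
              (by positivity) (by positivity)
        _ = δ / 2 := by field_simp
    have h2 := hmax k
    simp only [hβ]
    simp only [hδ] at h1 ⊢
    linarith
  have hβsm : ∀ n, StrictMono (β n) := by
    intro n k l hkl
    have h1 : α k ≤ α l := hmono (le_of_lt hkl)
    have h2 : ((k:ℕ):ℝ) + 1 < ((l:ℕ):ℝ) + 1 := by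
      have h : (k:ℕ) < (l:ℕ) := hkl
      have h' : ((k:ℕ):ℝ) < ((l:ℕ):ℝ) := by exact_mod_cast h
      linarith
    have h3 : (0:ℝ) < δ / (2 * p) := by positivity
    have h4 : (0:ℝ) < 1 / ((n:ℝ) + 1) := by positivity
    simp only [hβ]
    have h5 : (δ / (2 * (p:ℝ))) * (((k:ℕ):ℝ) + 1) * (1 / ((n:ℝ) + 1))
        < (δ / (2 * (p:ℝ))) * (((l:ℕ):ℝ) + 1) * (1 / ((n:ℝ) + 1)) :=
      mul_lt_mul_of_pos_right (mul_lt_mul_of_pos_left h2 h3) h4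
    linarith
  have hβtend : ∀ k, Tendsto (fun n : ℕ => β n k) atTop (𝓝 (α k)) := by
    intro k
    have h1 : Tendsto (fun n : ℕ => 1 / ((n:ℝ) + 1)) atTop (𝓝 0) :=
      tendsto_one_div_add_atTop_nhds_zero_nat
    have h2 := (h1.const_mul ((δ / (2 * p)) * (((k:ℕ):ℝ) + 1))).const_add (α k)
    simp only [mul_zero, add_zero] at h2
    simpa [hβ, mul_assoc] using h2
  have H : ∀ n : ℕ, ∃ r : Fin p → ℝ,
      (∀ i j : Fin p, i < j → r i < r j) ∧ (∀ i : Fin p, (i:ℕ) = 0 → r i < 0) ∧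
      (∀ i j : Fin p, (j:ℕ) + 1 = (i:ℕ) → β n j < r i ∧ r i < β n i) ∧
      ∀ c, (Qpoly p (β n)).eval c = ((p:ℝ) - 1) * ∏ i, (c - r i) :=
    fun n => exists_roots_strict p hp (β n) (hβsm n) (hβpos n)
  choose R hR1 hR2 hR3 hR4 using H
  have hRprev : ∀ n, ∀ i : Fin p, 0 < (i:ℕ) → β n ⟨(i:ℕ) - 1, by omega⟩ < R n i := by
    intro n i hi
    exact (hR3 n i ⟨(i:ℕ) - 1, by omega⟩ (by simp only [Fin.val_mk]; omega)).1
  have hRltβ : ∀ n, ∀ i : Fin p, R n i < β n i := by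
    intro n i
    by_cases hi : 0 < (i:ℕ)
    · exact (hR3 n i ⟨(i:ℕ) - 1, by omega⟩ (by simp only [Fin.val_mk]; omega)).2
    · exact lt_trans (hR2 n i (by omega)) (hβpos n i)
  have hRle1 : ∀ n, ∀ i, R n i ≤ 1 := fun n i => le_of_lt (lt_trans (hRltβ n i) (hβlt1 n i))
  have hRpos : ∀ n, ∀ i : Fin p, 0 < (i:ℕ) → a0 ≤ R n i := by
    intro n i hi
    have h1 := hRprev n i hi
    have h2 : a0 ≤ α ⟨(i:ℕ) - 1, by omega⟩ := by
      apply hmono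
      rw [Fin.le_def]
      simp only [hi0, Fin.val_mk]
      omega
    have h3 := hβge n ⟨(i:ℕ) - 1, by omega⟩
    linarith
  set K : ℝ := 1 / a0 ^ (p - 1) with hK
  have hKpos : 0 < K := by positivity
  have hRlow : ∀ n, ∀ i : Fin p, -K ≤ R n i := by
    intro n i
    by_cases hi : 0 < (i:ℕ)
    · have h1 : a0 ≤ R n i := hRpos n i hi
      linarith
    · have hi0' : (i:ℕ) = 0 := by omega
      have heq := hR4 n 0
      have hQ0 : (Qpoly p (β n)).eval 0 = - ∏ k, ((0:ℝ) - β n k) := by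
        simp [Qpoly, eval_prod]
      have e2 : ∏ k : Fin p, ((0:ℝ) - β n k) = (-1:ℝ)^p * ∏ k, β n k := by
        calc ∏ k : Fin p, ((0:ℝ) - β n k) = ∏ k : Fin p, -(β n k) :=
              Finset.prod_congr rfl fun j _ => by ring
          _ = (-1:ℝ)^(univ : Finset (Fin p)).card * ∏ k, β n k := prod_neg_form _ _
          _ = _ := by rw [Finset.card_univ, Fintype.card_fin]
      have e3 : ∏ j : Fin p, ((0:ℝ) - R n j) = (-1:ℝ)^p * ∏ j, R n j := by
        calc ∏ j : Fin p, ((0:ℝ) - R n j) = ∏ j : Fin p, -(R n j) :=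
              Finset.prod_congr rfl fun j _ => by ring
          _ = (-1:ℝ)^(univ : Finset (Fin p)).card * ∏ j, R n j := prod_neg_form _ _
          _ = _ := by rw [Finset.card_univ, Fintype.card_fin]
      have hpow : (-1:ℝ)^p * (-1:ℝ)^p = 1 := by
        rw [← pow_add]; exact Even.neg_one_pow ⟨p, rfl⟩
      have hmain : ((p:ℝ) - 1) * ∏ j, R n j = - ∏ k, β n k := by
        rw [hQ0, e2, e3] at heq
        linear_combination (-(-1:ℝ)^p) * heq
          - (∏ k, β n k + ((p:ℝ) - 1) * ∏ j, R n j) * hpow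
      have hsplit : ∏ j, R n j = R n i * ∏ j ∈ univ.erase i, R n j :=
        (Finset.mul_prod_erase univ _ (Finset.mem_univ i)).symm
      have hB : a0 ^ (p-1) ≤ ∏ j ∈ univ.erase i, R n j := by
        calc a0^(p-1) = ∏ _j ∈ univ.erase i, a0 := by
              rw [Finset.prod_const, Finset.card_erase_of_mem (Finset.mem_univ i),
                Finset.card_univ, Fintype.card_fin]
          _ ≤ ∏ j ∈ univ.erase i, R n j := by
              refine Finset.prod_le_prod (fun _ _ => le_of_lt ha0pos) (fun j hj => ?_)
              have hji : j ≠ i := Finset.ne_of_mem_erase hj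
              have hjv : 0 < (j:ℕ) := by
                rcases Nat.eq_zero_or_pos (j:ℕ) with h | h
                · exact absurd (Fin.ext (h.trans hi0'.symm) : j = i) hji
                · exact h
              exact hRpos n j hjv
      have hβprod1 : ∏ k, β n k ≤ 1 :=
        Finset.prod_le_one (fun k _ => le_of_lt (hβpos n k)) (fun k _ => le_of_lt (hβlt1 n k))
      have hRneg : R n i < 0 := hR2 n i hi0'
      have hp1 : (1:ℝ) ≤ (p:ℝ) - 1 := by
        have : (2:ℝ) ≤ (p:ℝ) := by exact_mod_cast hp
        linarith
      have hBpos : 0 < ∏ j ∈ univ.erase i, R n j := lt_of_lt_of_le (by positivity) hB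
      have hfinal : (-R n i) * a0^(p-1) ≤ 1 := by
        have h6 : (-R n i) * a0^(p-1) ≤ (-R n i) * (((p:ℝ)-1) * ∏ j ∈ univ.erase i, R n j) := by
          apply mul_le_mul_of_nonneg_left ?_ (by linarith)
          calc a0^(p-1) ≤ ∏ j ∈ univ.erase i, R n j := hB
            _ ≤ ((p:ℝ)-1) * ∏ j ∈ univ.erase i, R n j :=
                le_mul_of_one_le_left (le_of_lt hBpos) hp1
        have h7 : (-R n i) * (((p:ℝ)-1) * ∏ j ∈ univ.erase i, R n j) = ∏ k, β n k := by
          rw [hsplit] at hmain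
          linear_combination -hmain
        linarith
      have h8 : -R n i ≤ K := by
        rw [hK, le_div_iff₀ (by positivity : (0:ℝ) < a0^(p-1))]
        linarith
      linarith
  have hmem : ∀ n, R n ∈ Set.Icc (fun _ : Fin p => -K) (fun _ : Fin p => (1:ℝ)) := by
    intro n
    constructor
    · intro i; exact hRlow n i
    · intro i; exact hRle1 n i
  obtain ⟨r, _hrmem, φ, hφ, hconv⟩ :=
    (isCompact_Icc (a := fun _ : Fin p => -K) (b := fun _ : Fin p => (1:ℝ))).tendsto_subseq hmem
  have hconv' : ∀ i, Tendsto (fun n => R (φ n) i) atTop (𝓝 (r i)) := fun i =>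
    (tendsto_pi_nhds.1 hconv) i
  have hφtop : Tendsto φ atTop atTop := hφ.tendsto_atTop
  have hβφ : ∀ k, Tendsto (fun n => β (φ n) k) atTop (𝓝 (α k)) := fun k =>
    (hβtend k).comp hφtop
  have hQtend : ∀ c : ℝ, Tendsto (fun n => (Qpoly p (β (φ n))).eval c) atTop
      (𝓝 ((Qpoly p α).eval c)) := by
    intro c
    simp only [evalQ]
    apply Tendsto.sub
    · apply Tendsto.const_mul
      apply tendsto_finset_sum
      intro k _
      exact tendsto_finset_prod _ fun j _ => tendsto_const_nhds.sub (hβφ j)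
    · exact tendsto_finset_prod _ fun k _ => tendsto_const_nhds.sub (hβφ k)
  have hQeq : ∀ c : ℝ, (Qpoly p α).eval c = ((p:ℝ) - 1) * ∏ i, (c - r i) := by
    intro c
    have T2 : Tendsto (fun n => ((p:ℝ) - 1) * ∏ i, (c - R (φ n) i)) atTop
        (𝓝 (((p:ℝ)-1) * ∏ i, (c - r i))) := by
      apply Tendsto.const_mul
      exact tendsto_finset_prod _ fun i _ => tendsto_const_nhds.sub (hconv' i)
    have T1 := hQtend c
    have heqn : (fun n => (Qpoly p (β (φ n))).eval c)
        = fun n => ((p:ℝ)-1) * ∏ i, (c - R (φ n) i) := funext fun n => hR4 (φ n) c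
    rw [heqn] at T1
    exact tendsto_nhds_unique T1 T2
  refine ⟨r, ?_, ?_, ?_, hpos i0, ?_, hlt⟩
  · -- Monotone
    intro i j hij
    rcases lt_or_eq_of_le hij with h | h
    · exact le_of_tendsto_of_tendsto' (hconv' i) (hconv' j)
        (fun n => le_of_lt (hR1 (φ n) i j h))
    · rw [h]
  · -- determinant identity
    intro c
    rw [det_eq p (by omega) α c, hQeq c, mul_assoc]
  · -- r i0 < 0
    have hle : r i0 ≤ 0 := le_of_tendsto (hconv' i0)
      (Filter.Eventually.of_forall fun n => le_of_lt (hR2 (φ n) i0 rfl))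
    have hne : r i0 ≠ 0 := by
      intro h
      have h1 := hQeq 0
      have h2 : ∏ i, ((0:ℝ) - r i) = 0 :=
        Finset.prod_eq_zero (Finset.mem_univ i0) (by rw [h]; ring)
      rw [h2, mul_zero] at h1
      have h3 : (Qpoly p α).eval 0 = - ∏ k, ((0:ℝ) - α k) := by
        simp [Qpoly, eval_prod]
      rw [h3] at h1
      have h4 : ∏ k : Fin p, ((0:ℝ) - α k) ≠ 0 :=
        Finset.prod_ne_zero_iff.2 fun k _ => by
          have := hpos k; intro hh; linarith
      exact h4 (by linarith)
    exact lt_of_le_of_ne hle hne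
  · -- interlacing
    intro i j hij
    constructor
    · refine ge_of_tendsto (hconv' i) (Filter.Eventually.of_forall fun n => ?_)
      have h1 := (hR3 (φ n) i j hij).1
      have h2 := hβge (φ n) j
      linarith
    · exact le_of_tendsto_of_tendsto' (hconv' i) (hβφ i)
        (fun n => le_of_lt (hR3 (φ n) i j hij).2)
end

section
/- Let A ∈ B_I(p) be an n×n block correlation matrix with group sizes n_1,…,n_p, within-group correlations b_k ∈ (−1,1), common between-group correlation c ∈ (−1,1), and α_k = (1+(n_k−1)b_k)/n_k. Set α* = min_k α_k. If 0 < α_k < 1 for all k and −α*/(p−1) < c < α*, then A is positive definite. -/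
lemma sum_sigma_fin' {p : ℕ} {n : Fin p → ℕ} (f : ((k : Fin p) × Fin (n k)) → ℝ) :
    ∑ z, f z = ∑ k, ∑ j, f ⟨k, j⟩ := by
  rw [← Finset.univ_sigma_univ, Finset.sum_sigma]

open Matrix in
/-- Corollary 2 (sufficient condition on `B_I(p)`): for the block correlation
matrix `A` with within-group correlations `b_k` and common between-group
correlation `c`, if `0 < α_k < 1` for all `k` and `-α*/(p-1) < c < α*` where
`α* = min_k α_k`, then `A` is positive definite. -/
theorem blockClassI_sufficient (p : ℕ) (hp : 2 ≤ p) (n : Fin p → ℕ)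
    (hn : ∀ k, 1 ≤ n k)
    (b : Fin p → ℝ) (hb : ∀ k, -1 < b k ∧ b k < 1) (hb1 : ∀ k, n k = 1 → b k = 0)
    (c : ℝ) (hc : -1 < c ∧ c < 1)
    (A : Matrix ((k : Fin p) × Fin (n k)) ((k : Fin p) × Fin (n k)) ℝ)
    (hA : ∀ x y : (k : Fin p) × Fin (n k),
      A x y = if x = y then 1 else if x.1 = y.1 then b x.1 else c)
    (α : Fin p → ℝ) (hα : ∀ k, α k = (1 + ((n k : ℝ) - 1) * b k) / (n k : ℝ))
    (αstar : ℝ) (hαstar : (∀ k, αstar ≤ α k) ∧ ∃ k, αstar = α k)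
    (h1 : ∀ k, 0 < α k ∧ α k < 1)
    (h2 : -αstar / ((p : ℝ) - 1) < c ∧ c < αstar) :
    A.PosDef := by
  have hp1 : (1:ℝ) ≤ (p:ℝ) - 1 := by
    have : (2:ℝ) ≤ (p:ℝ) := by exact_mod_cast hp
    linarith
  constructor
  · -- Hermitian
    ext y z
    simp only [conjTranspose_apply, star_trivial]
    rw [hA, hA]
    rcases eq_or_ne y z with h | h
    · subst h; simp
    · rcases eq_or_ne y.1 z.1 with h2' | h2'
      · rw [if_neg (Ne.symm h), if_neg h, if_pos h2'.symm, if_pos h2', h2']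
      · rw [if_neg (Ne.symm h), if_neg h, if_neg (Ne.symm h2'), if_neg h2']
  · intro x hx
    set S : Fin p → ℝ := fun k => ∑ i, x ⟨k, i⟩ with hS
    set Q : Fin p → ℝ := fun k => ∑ i, (x ⟨k, i⟩)^2 with hQ
    -- the key identity
    have hAsplit : ∀ y z : (k : Fin p) × Fin (n k),
        A y z = c + ((if y.1 = z.1 then b y.1 - c else 0)
          + (if y = z then 1 - b y.1 else 0)) := by
      intro y z
      rw [hA]
      rcases eq_or_ne y z with h | h
      · subst h; simp
      · rcases eq_or_ne y.1 z.1 with h2' | h2' <;> simp [h, h2']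
    have hT : ∑ z : (k : Fin p) × Fin (n k), x z = ∑ k, S k := by
      rw [sum_sigma_fin']
    have inner1 : ∀ y : (k : Fin p) × Fin (n k),
        (∑ z, (if y.1 = z.1 then b y.1 - c else 0) * x z) = (b y.1 - c) * S y.1 := by
      intro y
      rw [sum_sigma_fin' (fun z => (if y.1 = z.1 then b y.1 - c else 0) * x z)]
      have h1 : ∀ l : Fin p, (∑ j : Fin (n l), (if y.1 = l then b y.1 - c else 0) * x ⟨l, j⟩)
          = if y.1 = l then (b y.1 - c) * S l else 0 := by
        intro l
        by_cases h : y.1 = l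
        · simp only [h, if_pos, ite_true, eq_self_iff_true]
          rw [← Finset.mul_sum]
        · simp [h]
      rw [Finset.sum_congr rfl fun l _ => h1 l, Finset.sum_ite_eq]
      simp
    have inner2 : ∀ y : (k : Fin p) × Fin (n k),
        (∑ z, (if y = z then 1 - b y.1 else 0) * x z) = (1 - b y.1) * x y := by
      intro y
      rw [Finset.sum_congr rfl (fun z _ => by rw [ite_mul, zero_mul]), Finset.sum_ite_eq]
      simp
    have inner : ∀ y : (k : Fin p) × Fin (n k),
        (∑ z, A y z * x z)
          = c * (∑ k, S k) + ((b y.1 - c) * S y.1 + (1 - b y.1) * x y) := by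
      intro y
      simp only [hAsplit, add_mul]
      rw [Finset.sum_add_distrib, Finset.sum_add_distrib, ← Finset.mul_sum, hT,
        inner1 y, inner2 y]
    have e1 : (∑ y : (k : Fin p) × Fin (n k), (b y.1 - c) * (S y.1 * x y))
        = ∑ k, (b k - c) * (S k)^2 := by
      rw [sum_sigma_fin' (fun y => (b y.1 - c) * (S y.1 * x y))]
      dsimp only
      apply Finset.sum_congr rfl
      intro k _
      rw [← Finset.mul_sum, ← Finset.mul_sum, sq]
    have e2 : (∑ y : (k : Fin p) × Fin (n k), (1 - b y.1) * (x y)^2)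
        = ∑ k, (1 - b k) * Q k := by
      rw [sum_sigma_fin' (fun y => (1 - b y.1) * (x y)^2)]
      dsimp only
      apply Finset.sum_congr rfl
      intro k _
      rw [← Finset.mul_sum]
    have key : dotProduct (star x) (A *ᵥ x)
        = (∑ k, ((1 - b k) * Q k + (b k - c) * (S k)^2)) + c * (∑ k, S k)^2 := by
      simp only [star_trivial, dotProduct, mulVec]
      have step : ∀ y : (k : Fin p) × Fin (n k), x y * (∑ z, A y z * x z)
          = c * (∑ k, S k) * x y
            + ((b y.1 - c) * (S y.1 * x y) + (1 - b y.1) * (x y)^2) := by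
        intro y; rw [inner y]; ring
      rw [Finset.sum_congr rfl (fun y _ => step y), Finset.sum_add_distrib,
        Finset.sum_add_distrib, ← Finset.mul_sum, hT, e1, e2, Finset.sum_add_distrib]
      ring
    -- set up the bound
    set e : ℝ := if 0 ≤ c then c else -((p:ℝ) - 1) * c with he_def
    have he_lt : e < αstar := by
      rw [he_def]
      split_ifs with h
      · exact h2.2
      · have hp0 : (0:ℝ) < (p:ℝ) - 1 := by linarith
        have := h2.1
        rw [div_lt_iff₀ hp0] at this
        nlinarith
    have hQ0 : ∀ k, 0 ≤ Q k := fun k => Finset.sum_nonneg fun i _ => sq_nonneg _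
    have hCS : ∀ k, (S k)^2 ≤ (n k : ℝ) * Q k := by
      intro k
      have := sq_sum_le_card_mul_sum_sq (s := Finset.univ)
        (f := fun i : Fin (n k) => x ⟨k, i⟩)
      simpa [hS, hQ] using this
    have hCSp : (∑ k, S k)^2 ≤ (p : ℝ) * ∑ k, (S k)^2 := by
      have := sq_sum_le_card_mul_sum_sq (s := Finset.univ) (f := S)
      simpa using this
    have hcoupling : (c - e) * (∑ k, (S k)^2) ≤ c * (∑ k, S k)^2 := by
      rw [he_def]
      split_ifs with h
      · simpa using mul_nonneg h (sq_nonneg (∑ k, S k))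
      · push_neg at h
        nlinarith [hCSp]
    have hnα : ∀ k, (1:ℝ) + ((n k : ℝ) - 1) * b k = (n k : ℝ) * α k := by
      intro k
      have hnk : (0:ℝ) < (n k : ℝ) := by
        have := hn k; exact_mod_cast Nat.lt_of_lt_of_le Nat.zero_lt_one this
      rw [hα k]
      field_simp
    have hαe : ∀ k, 0 < α k - e := fun k => by linarith [hαstar.1 k]
    have hblock : ∀ k, (0 ≤ (1 - b k) * Q k + (b k - e) * (S k)^2)
        ∧ (0 < Q k → 0 < (1 - b k) * Q k + (b k - e) * (S k)^2) := by
      intro k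
      have hb2 := (hb k).2
      have hnk : (1:ℝ) ≤ (n k : ℝ) := by exact_mod_cast hn k
      by_cases h : e ≤ b k
      · have hbe : 0 ≤ (b k - e) * (S k)^2 :=
          mul_nonneg (by linarith) (sq_nonneg (S k))
        constructor
        · have := mul_nonneg (by linarith : (0:ℝ) ≤ 1 - b k) (hQ0 k)
          linarith
        · intro hQk
          have := mul_pos (by linarith : (0:ℝ) < 1 - b k) hQk
          linarith
      · push_neg at h
        have h5 : (b k - e) * ((n k : ℝ) * Q k) ≤ (b k - e) * (S k)^2 :=
          mul_le_mul_of_nonpos_left (hCS k) (by linarith)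
        have h6 : (1 - b k) * Q k + (b k - e) * ((n k : ℝ) * Q k)
            = (n k : ℝ) * (α k - e) * Q k := by
          linear_combination Q k * hnα k
        constructor
        · have := mul_nonneg (mul_nonneg (by linarith : (0:ℝ) ≤ (n k:ℝ)) (hαe k).le) (hQ0 k)
          linarith
        · intro hQk
          have := mul_pos (mul_pos (by linarith : (0:ℝ) < (n k:ℝ)) (hαe k)) hQk
          linarith
    -- some block has positive Q
    obtain ⟨y, hy⟩ : ∃ y, x y ≠ 0 := by
      by_contra hcon; push_neg at hcon; exact hx (Finsupp.ext fun a => by simp [hcon a])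
    have hQpos : 0 < Q y.1 := by
      have hle : (x ⟨y.1, y.2⟩)^2 ≤ Q y.1 :=
        Finset.single_le_sum (fun i _ => sq_nonneg (x ⟨y.1, i⟩)) (Finset.mem_univ y.2)
      have hxy : x ⟨y.1, y.2⟩ = x y := rfl
      have h0 : 0 < (x y)^2 := by positivity
      rw [hxy] at hle
      linarith
    have hsum : 0 < ∑ k, ((1 - b k) * Q k + (b k - e) * (S k)^2) :=
      Finset.sum_pos' (fun k _ => (hblock k).1) ⟨y.1, Finset.mem_univ _, (hblock y.1).2 hQpos⟩
    have expand2 : ∑ k, ((1 - b k) * Q k + (b k - e) * (S k)^2)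
        = (∑ k, ((1 - b k) * Q k + (b k - c) * (S k)^2)) + (c - e) * ∑ k, (S k)^2 := by
      rw [Finset.mul_sum, ← Finset.sum_add_distrib]
      apply Finset.sum_congr rfl
      intros; ring
    have hconv : (x.sum fun i xi => x.sum fun j xj => star xi * A i j * xj)
        = dotProduct (star ⇑x) (A *ᵥ ⇑x) := by
      rw [Finsupp.sum_fintype _ _ (fun i => by simp)]
      simp only [dotProduct, mulVec, Pi.star_apply, Finset.mul_sum, mul_assoc]
      refine Finset.sum_congr rfl fun i _ => ?_
      rw [Finsupp.sum_fintype _ _ (fun j => by simp)]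
    rw [hconv, key]
    rw [expand2] at hsum
    linarith
end
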